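/- arXiv:2306.11677 — 7 statements merged into one kernel-verified Lean document; each statement's English description precedes it below -/
import Mathlib

section
/- For pure states, the squared robustness of imaginarity equals 1 - |⟨ψ|ψ*⟩|²: if ρ = |ψ⟩⟨ψ| is a pure state, then (½‖ρ - ρᵀ‖₁)² = 1 - |⟨ψ|ψ*⟩|². -/
open Matrix
open scoped ComplexOrder

/-- Trace norm of a complex square matrix: `‖A‖₁ = tr √(A Aᴴ)`. -/
noncomputable def traceNorm {d : ℕ} (A : Matrix (Fin d) (Fin d) ℂ) : ℝ :=
  (((Matrix.posSemidef_self_mul_conjTranspose A).isHermitian.eigenvectorUnitary : Matrix (Fin d) (Fin d) ℂ) *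
      diagonal (fun i => ((Real.sqrt (((Matrix.posSemidef_self_mul_conjTranspose A).isHermitian.eigenvalues) i) : ℝ) : ℂ)) *
      (star (Matrix.posSemidef_self_mul_conjTranspose A).isHermitian.eigenvectorUnitary :
        Matrix (Fin d) (Fin d) ℂ)).trace.re

open scoped MatrixOrder in
private lemma traceNorm_mat_eq {d : ℕ} (A B : Matrix (Fin d) (Fin d) ℂ) (hB : B.PosSemidef)
    (h : B * B = A * Aᴴ) :
    B = ((Matrix.posSemidef_self_mul_conjTranspose A).isHermitian.eigenvectorUnitary : Matrix (Fin d) (Fin d) ℂ) *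
      diagonal (fun i => ((Real.sqrt (((Matrix.posSemidef_self_mul_conjTranspose A).isHermitian.eigenvalues) i) : ℝ) : ℂ)) *
      (star (Matrix.posSemidef_self_mul_conjTranspose A).isHermitian.eigenvectorUnitary :
        Matrix (Fin d) (Fin d) ℂ) := by
  have hA := Matrix.posSemidef_self_mul_conjTranspose A
  rw [← CFC.sqrt_unique h hB.nonneg, CFC.sqrt_eq_cfc, cfc_nnreal_eq_real _ _ hA.nonneg,
    hA.1.cfc_eq]
  simp only [IsHermitian.cfc, Real.coe_sqrt, Real.coe_toNNReal', Unitary.conjStarAlgAut_apply]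
  congr 3
  funext i
  simp [max_eq_left (hA.eigenvalues_nonneg i)]

open scoped MatrixOrder in
private lemma psd_eq_zero_of_sq {d : ℕ} {M : Matrix (Fin d) (Fin d) ℂ} (hM : M.PosSemidef)
    (h : M ^ 2 = 0) : M = 0 := by
  have := CFC.sqrt_mul_self M hM.nonneg
  rw [← sq, h, CFC.sqrt_zero] at this
  exact this.symm

private lemma vmv_mul {d : ℕ} (a b c e : Fin d → ℂ) :
    Matrix.vecMulVec a b * Matrix.vecMulVec c e = (b ⬝ᵥ c) • Matrix.vecMulVec a e := by
  ext i j
  simp only [Matrix.mul_apply, Matrix.vecMulVec_apply, Matrix.smul_apply, dotProduct,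
    smul_eq_mul, Finset.sum_mul]
  exact Finset.sum_congr rfl fun k _ => by ring

private lemma trace_vmv {d : ℕ} (a b : Fin d → ℂ) :
    (Matrix.vecMulVec a b).trace = a ⬝ᵥ b := by
  simp [Matrix.trace, Matrix.diag, Matrix.vecMulVec_apply, dotProduct]

private lemma psd_real_smul {d : ℕ} {M : Matrix (Fin d) (Fin d) ℂ} (hM : M.PosSemidef)
    {r : ℝ} (hr : 0 ≤ r) : ((r : ℂ) • M).PosSemidef := by
  exact hM.smul (a := (r : ℂ)) (by exact_mod_cast hr)

/-- For a pure state `ρ = |ψ⟩⟨ψ|`, the squared robustness of imaginarity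
`(½‖ρ - ρᵀ‖₁)²` equals `1 - |⟨ψ|ψ*⟩|²`. -/
theorem robustness_imaginarity_pure (d : ℕ) (ψ : Fin d → ℂ)
    (hψ : ∑ k, ‖ψ k‖ ^ 2 = 1) :
    (traceNorm ((Matrix.of fun i j => ψ i * starRingEnd ℂ (ψ j)) -
        (Matrix.of fun i j => ψ i * starRingEnd ℂ (ψ j))ᵀ) / 2) ^ 2
      = 1 - ‖∑ k, starRingEnd ℂ (ψ k) * starRingEnd ℂ (ψ k)‖ ^ 2 := by
  classical
  set c : ℂ := ∑ k, starRingEnd ℂ (ψ k) * starRingEnd ℂ (ψ k) with hc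
  set P : Matrix (Fin d) (Fin d) ℂ := Matrix.vecMulVec ψ (star ψ) with hP
  set Q : Matrix (Fin d) (Fin d) ℂ := Matrix.vecMulVec (star ψ) ψ with hQ
  set S : Matrix (Fin d) (Fin d) ℂ := Matrix.vecMulVec ψ ψ with hS
  set T : Matrix (Fin d) (Fin d) ℂ := Matrix.vecMulVec (star ψ) (star ψ) with hT
  set A : Matrix (Fin d) (Fin d) ℂ :=
    (Matrix.of fun i j => ψ i * starRingEnd ℂ (ψ j)) -
      (Matrix.of fun i j => ψ i * starRingEnd ℂ (ψ j))ᵀ with hA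
  -- A = P - Q
  have hAPQ : A = P - Q := by
    ext i j
    simp [hA, hP, hQ, Matrix.vecMulVec_apply, Pi.star_apply]
    ring
  -- dot products
  have hone : (star ψ) ⬝ᵥ ψ = 1 := by
    have h1 : ∀ k, (star ψ) k * ψ k = ((‖ψ k‖ ^ 2 : ℝ) : ℂ) := by
      intro k
      rw [Pi.star_apply, mul_comm, RCLike.star_def, Complex.mul_conj, Complex.normSq_eq_norm_sq]
    rw [dotProduct, Finset.sum_congr rfl fun k _ => h1 k, ← Complex.ofReal_sum, hψ,
      Complex.ofReal_one]
  have hone' : ψ ⬝ᵥ (star ψ) = 1 := by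
    rw [← hone]
    exact Finset.sum_congr rfl fun k _ => mul_comm _ _
  have hcc : (star ψ) ⬝ᵥ (star ψ) = c := by
    simp [dotProduct, hc, Pi.star_apply]
  have hccbar : ψ ⬝ᵥ ψ = starRingEnd ℂ c := by
    rw [hc, map_sum, dotProduct]
    exact Finset.sum_congr rfl fun k _ => by simp
  -- multiplication table
  have hPP : P * P = P := by rw [hP, vmv_mul, hone, one_smul]
  have hQQ : Q * Q = Q := by rw [hQ, vmv_mul, hone', one_smul]
  have hPQ : P * Q = c • S := by rw [hP, hQ, vmv_mul, hcc, hS]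
  have hQP : Q * P = (starRingEnd ℂ c) • T := by rw [hQ, hP, vmv_mul, hccbar, hT]
  have hPS : P * S = S := by rw [hP, hS, vmv_mul, hone, one_smul]
  have hPT : P * T = c • P := by rw [hP, hT, vmv_mul, hcc]
  have hQS : Q * S = (starRingEnd ℂ c) • Q := by rw [hQ, hS, vmv_mul, hccbar]
  have hQT : Q * T = T := by rw [hQ, hT, vmv_mul, hone', one_smul]
  have hSP : S * P = (starRingEnd ℂ c) • P := by rw [hS, hP, vmv_mul, hccbar]
  have hSQ : S * Q = S := by rw [hS, hQ, vmv_mul, hone', one_smul]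
  have hTP : T * P = T := by rw [hT, hP, vmv_mul, hone, one_smul]
  have hTQ : T * Q = c • Q := by rw [hT, hQ, vmv_mul, hcc]
  have hSS : S * S = (starRingEnd ℂ c) • S := by rw [hS, vmv_mul, hccbar]
  have hTT : T * T = c • T := by rw [hT, vmv_mul, hcc]
  have hST : S * T = P := by rw [hS, hT, hP, vmv_mul, hone', one_smul]
  have hTS : T * S = Q := by rw [hT, hS, hQ, vmv_mul, hone, one_smul]
  -- c * conj c = ‖c‖^2
  have hcnorm : c * starRingEnd ℂ c = ((‖c‖ ^ 2 : ℝ) : ℂ) := by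
    rw [Complex.mul_conj, Complex.normSq_eq_norm_sq]
  have hcnorm' : starRingEnd ℂ c * c = ((‖c‖ ^ 2 : ℝ) : ℂ) := by
    rw [mul_comm]; exact hcnorm
  -- A squared
  have hA2 : A * A = P + Q - c • S - (starRingEnd ℂ c) • T := by
    rw [hAPQ, sub_mul, mul_sub, mul_sub, hPP, hQQ, hPQ, hQP]
    abel
  -- A^4 = (1 - ‖c‖²) • A²
  have hA4 : (A * A) * (A * A) = ((1 - ‖c‖ ^ 2 : ℝ) : ℂ) • (A * A) := by
    rw [hA2]
    simp only [sub_mul, mul_sub, add_mul, mul_add, smul_mul_assoc, mul_smul_comm,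
      hPP, hQQ, hPQ, hQP, hPS, hPT, hQS, hQT, hSP, hSQ, hTP, hTQ,
      hSS, hTT, hST, hTS, smul_smul, hcnorm, hcnorm']
    push_cast
    push_cast at hcnorm hcnorm'
    match_scalars <;> linear_combination (norm := ring_nf) hcnorm' - hcnorm
    
  -- trace of A²
  have htr : (A * A).trace = ((2 - 2 * ‖c‖ ^ 2 : ℝ) : ℂ) := by
    rw [hA2]
    simp only [Matrix.trace_sub, Matrix.trace_add, Matrix.trace_smul,
      hP, hQ, hS, hT, trace_vmv, hone', hone, hccbar, hcc, smul_eq_mul, hcnorm, hcnorm']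
    push_cast
    ring
  -- A is Hermitian
  have hAH : Aᴴ = A := by
    ext i j
    simp [hA, Matrix.conjTranspose_apply]
    ring
  -- A * Aᴴ = A * A
  have hAAH : A * Aᴴ = A * A := by rw [hAH]
  have hpsd : (A * A).PosSemidef := hAAH ▸ Matrix.posSemidef_self_mul_conjTranspose A
  -- ‖c‖ ≤ 1
  have hcle : ‖c‖ ≤ 1 := by
    rw [hc, ← hψ]
    refine (norm_sum_le _ _).trans_eq (Finset.sum_congr rfl fun k _ => ?_)
    rw [norm_mul, RCLike.norm_conj, sq]
  have hnn : 0 ≤ 1 - ‖c‖ ^ 2 := by nlinarith [norm_nonneg c]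
  set lam : ℝ := Real.sqrt (1 - ‖c‖ ^ 2) with hlam
  have hlamsq : lam ^ 2 = 1 - ‖c‖ ^ 2 := Real.sq_sqrt hnn
  have hlamnn : 0 ≤ lam := Real.sqrt_nonneg _
  rcases eq_or_lt_of_le hlamnn with h0 | hpos
  · -- lam = 0 : A*A = 0, sqrt = 0
    have hsq0 : 1 - ‖c‖ ^ 2 = 0 := by rw [← hlamsq, ← h0]; ring
    have hAA0 : A * A = 0 := by
      have h2 : (A * A) ^ 2 = (0 : Matrix (Fin d) (Fin d) ℂ) ^ 2 := by
        rw [sq, hA4, hsq0]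
        simp
      exact psd_eq_zero_of_sq hpsd (by simpa using h2)
    have hsqrt := traceNorm_mat_eq A 0 Matrix.PosSemidef.zero (by rw [hAAH, hAA0]; simp)
    rw [traceNorm, ← hsqrt]
    simp only [Matrix.trace_zero, Complex.zero_re]
    have h4 : ((0 : ℝ) / 2) ^ 2 = 0 := by norm_num
    rw [h4]
    linarith [hsq0]
  · -- lam > 0
    set B : Matrix (Fin d) (Fin d) ℂ := ((lam⁻¹ : ℝ) : ℂ) • (A * A) with hB
    have hBpsd : B.PosSemidef := psd_real_smul hpsd (by positivity)
    have hlneC : ((lam : ℝ) : ℂ) ≠ 0 := by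
      exact_mod_cast hpos.ne'
    have hBsq : B ^ 2 = A * Aᴴ := by
      rw [hAAH, sq, hB, smul_mul_assoc, mul_smul_comm, hA4, smul_smul, smul_smul,
        ← hlamsq]
      have h1 : ((lam⁻¹ : ℝ) : ℂ) * ((lam⁻¹ : ℝ) : ℂ) * ((lam ^ 2 : ℝ) : ℂ) = 1 := by
        push_cast
        field_simp
      rw [h1, one_smul]
    have hsqrt := traceNorm_mat_eq A B hBpsd (by rw [← sq]; exact hBsq)
    have htrB : B.trace = ((2 * lam : ℝ) : ℂ) := by
      rw [hB, Matrix.trace_smul, htr, smul_eq_mul]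
      have h2 : (2 : ℝ) - 2 * ‖c‖ ^ 2 = 2 * lam ^ 2 := by rw [hlamsq]; ring
      rw [h2]
      push_cast
      field_simp
    rw [traceNorm, ← hsqrt, htrB]
    simp only [Complex.ofReal_re]
    have h3 : 2 * lam / 2 = lam := by ring
    rw [h3, hlamsq]
end

section
/- The average imaginarity of Haar-random pure states is 1 - 2/(d+1): for the Haar measure η on U(ℂ^d) with d ≥ 1, ∫ [1 - |⟨ψ_U|ψ_U*⟩|²] dη(U) = 1 - 2/(d+1), where ψ_U = U|0⟩. -/
open Matrix MeasureTheory
noncomputable instance matrixMeasurableSpace (d : ℕ) : MeasurableSpace (Matrix (Fin d) (Fin d) ℂ) :=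
  MeasurableSpace.pi

namespace AvgImag
variable {d : ℕ}

abbrev G (d : ℕ) := Matrix.unitaryGroup (Fin d) ℂ

def u (hd : 0 < d) (j : Fin d) (U : G d) : ℂ := (U : Matrix (Fin d) (Fin d) ℂ) j ⟨0, hd⟩

lemma measurable_entry (j k : Fin d) :
    Measurable (fun U : G d => (U : Matrix (Fin d) (Fin d) ℂ) j k) := by
  have h1 : Measurable (fun M : Matrix (Fin d) (Fin d) ℂ => M j k) :=
    (measurable_pi_apply _).comp (measurable_pi_apply j)
  exact h1.comp measurable_subtype_coe

lemma measurable_u (hd : 0 < d) (j : Fin d) : Measurable (u hd j) :=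
  measurable_entry j ⟨0, hd⟩

lemma sum_conj_mul (hd : 0 < d) (U : G d) :
    ∑ k, (starRingEnd ℂ) (u hd k U) * u hd k U = 1 := by
  have h := U.2.1
  have h2 := congrFun (congrFun h ⟨0, hd⟩) ⟨0, hd⟩
  simpa [Matrix.mul_apply, Matrix.conjTranspose_apply, Matrix.star_apply, u,
    Matrix.one_apply] using h2

lemma norm_u_le (hd : 0 < d) (j : Fin d) (U : G d) : ‖u hd j U‖ ≤ 1 := by
  have h := sum_conj_mul hd U
  have h2 : ∑ k, Complex.normSq (u hd k U) = 1 := by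
    have := congrArg Complex.re h
    simpa [Complex.mul_conj', Complex.normSq_apply] using this
  have hle : Complex.normSq (u hd j U) ≤ 1 := by
    rw [← h2]
    exact Finset.single_le_sum (f := fun k => Complex.normSq (u hd k U))
      (fun k _ => Complex.normSq_nonneg _) (Finset.mem_univ j)
  have h3 : ‖u hd j U‖ ^ 2 ≤ 1 := by
    rw [Complex.sq_norm]; exact hle
  nlinarith [norm_nonneg (u hd j U)]

lemma measurable_mul_left (V : G d) : Measurable (fun U : G d => V * U) := by
  have key : Measurable (fun U : G d => (V : Matrix (Fin d) (Fin d) ℂ) * (U : Matrix (Fin d) (Fin d) ℂ)) := by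
    apply measurable_pi_lambda
    intro j
    apply measurable_pi_lambda
    intro k
    simp only [Matrix.mul_apply]
    exact Finset.measurable_sum _ fun m _ => measurable_const.mul (measurable_entry m k)
  have heq : (fun U : G d => V * U) = fun U : G d =>
      (⟨(V : Matrix (Fin d) (Fin d) ℂ) * (U : Matrix (Fin d) (Fin d) ℂ),
        mul_mem V.2 U.2⟩ : G d) := by
    funext U; exact Subtype.ext rfl
  rw [heq]
  exact key.subtype_mk

variable (μ : Measure (G d)) [IsProbabilityMeasure μ]

omit [IsProbabilityMeasure μ] in
lemma integral_comp_mul_left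
    (hinv : ∀ V : G d, Measure.map (fun U => V * U) μ = μ)
    (V : G d) {f : G d → ℂ} (hf : Measurable f) :
    ∫ U, f (V * U) ∂μ = ∫ U, f U ∂μ := by
  conv_rhs => rw [← hinv V]
  rw [integral_map (measurable_mul_left V).aemeasurable hf.aestronglyMeasurable]

noncomputable def mom (hd : 0 < d) (μ : Measure (G d)) (j k l m : Fin d) : ℂ :=
  ∫ U, u hd j U * u hd k U * (starRingEnd ℂ) (u hd l U) * (starRingEnd ℂ) (u hd m U) ∂μ

lemma measurable_momFn (hd : 0 < d) (j k l m : Fin d) :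
    Measurable (fun U => u hd j U * u hd k U * (starRingEnd ℂ) (u hd l U) *
      (starRingEnd ℂ) (u hd m U)) :=
  (((measurable_u hd j).mul (measurable_u hd k)).mul
    (Complex.continuous_conj.measurable.comp (measurable_u hd l))).mul
    (Complex.continuous_conj.measurable.comp (measurable_u hd m))

lemma integrable_momFn (hd : 0 < d) (j k l m : Fin d) :
    Integrable (fun U => u hd j U * u hd k U * (starRingEnd ℂ) (u hd l U) *
      (starRingEnd ℂ) (u hd m U)) μ := by
  refine (integrable_const (1 : ℝ)).mono'
    (measurable_momFn hd j k l m).aestronglyMeasurable ?_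
  filter_upwards with U
  have h1 := norm_u_le hd j U
  have h2 := norm_u_le hd k U
  have h3 := norm_u_le hd l U
  have h4 := norm_u_le hd m U
  calc ‖u hd j U * u hd k U * (starRingEnd ℂ) (u hd l U) * (starRingEnd ℂ) (u hd m U)‖
      = ‖u hd j U‖ * ‖u hd k U‖ * ‖u hd l U‖ * ‖u hd m U‖ := by
        simp [norm_mul]
    _ ≤ 1 := by
        have n1 : (0:ℝ) ≤ ‖u hd j U‖ := norm_nonneg _
        have n2 : (0:ℝ) ≤ ‖u hd k U‖ := norm_nonneg _
        have n3 : (0:ℝ) ≤ ‖u hd l U‖ := norm_nonneg _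
        have n4 : (0:ℝ) ≤ ‖u hd m U‖ := norm_nonneg _
        have hab : ‖u hd j U‖ * ‖u hd k U‖ ≤ 1 := by nlinarith
        have habn : (0:ℝ) ≤ ‖u hd j U‖ * ‖u hd k U‖ := mul_nonneg n1 n2
        have habc : ‖u hd j U‖ * ‖u hd k U‖ * ‖u hd l U‖ ≤ 1 := by nlinarith
        have habcn : (0:ℝ) ≤ ‖u hd j U‖ * ‖u hd k U‖ * ‖u hd l U‖ := mul_nonneg habn n3
        nlinarith

end AvgImag

namespace AvgImag
variable {d : ℕ}

lemma diag_mem (f : Fin d → ℂ) (hf : ∀ k, star (f k) * f k = 1) :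
    Matrix.diagonal f ∈ Matrix.unitaryGroup (Fin d) ℂ := by
  constructor
  · rw [Matrix.star_eq_conjTranspose, Matrix.diagonal_conjTranspose,
      Matrix.diagonal_mul_diagonal]
    have h : (fun i => star (f i) * f i) = fun _ => (1:ℂ) := by funext k; exact hf k
    simp only [Pi.star_apply] at h ⊢
    rw [h, Matrix.diagonal_one]
  · rw [Matrix.star_eq_conjTranspose, Matrix.diagonal_conjTranspose,
      Matrix.diagonal_mul_diagonal]
    have h : (fun i => f i * star (f i)) = fun _ => (1:ℂ) := by
      funext k; rw [mul_comm]; exact hf k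
    simp only [Pi.star_apply] at h ⊢
    rw [h, Matrix.diagonal_one]

/-- phase unitary: multiplies coordinate `p` by `I`. -/
noncomputable def ph (p : Fin d) : G d :=
  ⟨Matrix.diagonal (fun k => if k = p then Complex.I else 1), by
    apply diag_mem
    intro k
    split_ifs <;> simp [Complex.conj_I, Complex.I_mul_I]⟩

lemma u_ph (hd : 0 < d) (p j : Fin d) (U : G d) :
    u hd j (ph p * U) = (if j = p then Complex.I else 1) * u hd j U := by
  show ((ph p * U : G d) : Matrix (Fin d) (Fin d) ℂ) j ⟨0, hd⟩ = _
  have h : ((ph p * U : G d) : Matrix (Fin d) (Fin d) ℂ) =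
      Matrix.diagonal (fun k => if k = p then Complex.I else 1) *
        (U : Matrix (Fin d) (Fin d) ℂ) := rfl
  rw [h, Matrix.diagonal_mul]
  rfl

/-- permutation unitary -/
def pm (σ : Equiv.Perm (Fin d)) : G d :=
  ⟨Matrix.of (fun r c => if c = σ r then (1:ℂ) else 0), by
    constructor
    · ext j k
      simp only [Matrix.mul_apply, Matrix.star_eq_conjTranspose, Matrix.conjTranspose_apply,
        Matrix.of_apply, Matrix.one_apply]
      have h : ∀ c : Fin d, star (if j = σ c then (1:ℂ) else 0) * (if k = σ c then 1 else 0)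
          = if c = σ.symm j then (if j = k then 1 else 0) else 0 := by
        intro c
        by_cases hc : c = σ.symm j
        · subst hc
          simp [eq_comm]
        · have hj : ¬ (j = σ c) := by
            intro h; apply hc; rw [h]; simp
          simp [hj, hc]
      rw [Finset.sum_congr rfl (fun c _ => h c), Finset.sum_ite_eq' Finset.univ (σ.symm j)]
      simp
    · ext j k
      simp only [Matrix.mul_apply, Matrix.star_eq_conjTranspose, Matrix.conjTranspose_apply,
        Matrix.of_apply, Matrix.one_apply]
      have h : ∀ c : Fin d, (if c = σ j then (1:ℂ) else 0) * star (if c = σ k then 1 else 0)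
          = if c = σ j then (if j = k then 1 else 0) else 0 := by
        intro c
        by_cases hc : c = σ j
        · subst hc
          simp [EmbeddingLike.apply_eq_iff_eq]
        · simp [hc]
      rw [Finset.sum_congr rfl (fun c _ => h c), Finset.sum_ite_eq' Finset.univ (σ j)]
      simp⟩

lemma u_pm (hd : 0 < d) (σ : Equiv.Perm (Fin d)) (j : Fin d) (U : G d) :
    u hd j (pm σ * U) = u hd (σ j) U := by
  show ((pm σ * U : G d) : Matrix (Fin d) (Fin d) ℂ) j ⟨0, hd⟩ = _
  have h : ((pm σ * U : G d) : Matrix (Fin d) (Fin d) ℂ) j ⟨0, hd⟩ =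
      ∑ c, (if c = σ j then (1:ℂ) else 0) * (U : Matrix (Fin d) (Fin d) ℂ) c ⟨0, hd⟩ := rfl
  rw [h]
  simp [u]

end AvgImag

namespace AvgImag
variable {d : ℕ} (μ : Measure (G d)) [IsProbabilityMeasure μ]

omit [IsProbabilityMeasure μ] in
lemma mom_pm (hd : 0 < d) (hinv : ∀ V : G d, Measure.map (fun U => V * U) μ = μ)
    (σ : Equiv.Perm (Fin d)) (j k l m : Fin d) :
    mom hd μ j k l m = mom hd μ (σ j) (σ k) (σ l) (σ m) := by
  unfold mom
  conv_lhs => rw [← integral_comp_mul_left μ hinv (pm σ) (measurable_momFn hd j k l m)]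
  congr 1
  funext U
  simp only [u_pm]

omit [IsProbabilityMeasure μ] in
lemma mom_ph (hd : 0 < d) (hinv : ∀ V : G d, Measure.map (fun U => V * U) μ = μ)
    (p j k l m : Fin d) :
    mom hd μ j k l m =
      ((if j = p then Complex.I else 1) * (if k = p then Complex.I else 1) *
        (starRingEnd ℂ) (if l = p then Complex.I else 1) *
        (starRingEnd ℂ) (if m = p then Complex.I else 1)) * mom hd μ j k l m := by
  conv_lhs => rw [mom, ← integral_comp_mul_left μ hinv (ph p) (measurable_momFn hd j k l m)]
  have h : ∀ U : G d,
      u hd j (ph p * U) * u hd k (ph p * U) * (starRingEnd ℂ) (u hd l (ph p * U)) *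
        (starRingEnd ℂ) (u hd m (ph p * U)) =
      ((if j = p then Complex.I else 1) * (if k = p then Complex.I else 1) *
        (starRingEnd ℂ) (if l = p then Complex.I else 1) *
        (starRingEnd ℂ) (if m = p then Complex.I else 1)) *
        (u hd j U * u hd k U * (starRingEnd ℂ) (u hd l U) * (starRingEnd ℂ) (u hd m U)) := by
    intro U
    simp only [u_ph, _root_.map_mul]
    ring
  simp only [h]; rw [integral_const_mul]; rfl

end AvgImag

namespace AvgImag
variable {d : ℕ}

noncomputable def aa : ℝ := (Real.sqrt 2)⁻¹

lemma aa_mul_aa : (aa : ℂ) * (aa : ℂ) = 1/2 := by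
  rw [aa, ← Complex.ofReal_mul, ← mul_inv, Real.mul_self_sqrt (by norm_num : (0:ℝ) ≤ 2)]
  norm_num

section Had
variable (h2 : 1 < d)

def I0 : Fin d := ⟨0, by omega⟩
def I1 : Fin d := ⟨1, h2⟩

lemma I0_ne_I1 : I0 h2 ≠ I1 h2 := by
  simp [I0, I1, Fin.ext_iff]

noncomputable def hadM : Matrix (Fin d) (Fin d) ℂ := Matrix.of fun r c =>
  if r = I0 h2 then (if c = I0 h2 then (aa:ℂ) else if c = I1 h2 then (aa:ℂ) else 0)
  else if r = I1 h2 then (if c = I0 h2 then (aa:ℂ) else if c = I1 h2 then -(aa:ℂ) else 0)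
  else if c = r then 1 else 0

lemma sum_two (x y : ℂ) (f : Fin d → ℂ) :
    ∑ c, (if c = I0 h2 then x else if c = I1 h2 then y else 0) * f c
      = x * f (I0 h2) + y * f (I1 h2) := by
  have h : ∀ c, (if c = I0 h2 then x else if c = I1 h2 then y else 0) * f c
      = (if c = I0 h2 then x * f c else 0) + (if c = I1 h2 then y * f c else 0) := by
    intro c
    by_cases hc0 : c = I0 h2
    · subst hc0
      simp [I0_ne_I1 h2]
    · by_cases hc1 : c = I1 h2 <;> simp [hc0, hc1, (I0_ne_I1 h2).symm]
  rw [Finset.sum_congr rfl (fun c _ => h c), Finset.sum_add_distrib,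
    Finset.sum_ite_eq' Finset.univ (I0 h2), Finset.sum_ite_eq' Finset.univ (I1 h2)]
  simp

lemma had_row0 (f : Fin d → ℂ) :
    ∑ c, hadM h2 (I0 h2) c * f c = (aa:ℂ) * f (I0 h2) + (aa:ℂ) * f (I1 h2) := by
  have h : ∀ c, hadM h2 (I0 h2) c
      = (if c = I0 h2 then (aa:ℂ) else if c = I1 h2 then (aa:ℂ) else 0) := by
    intro c; simp [hadM]
  rw [Finset.sum_congr rfl (fun c _ => by rw [h c])]
  exact sum_two h2 _ _ f

lemma had_row1 (f : Fin d → ℂ) :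
    ∑ c, hadM h2 (I1 h2) c * f c = (aa:ℂ) * f (I0 h2) + (-(aa:ℂ)) * f (I1 h2) := by
  have h : ∀ c, hadM h2 (I1 h2) c
      = (if c = I0 h2 then (aa:ℂ) else if c = I1 h2 then -(aa:ℂ) else 0) := by
    intro c; simp [hadM, (I0_ne_I1 h2).symm]
  rw [Finset.sum_congr rfl (fun c _ => by rw [h c])]
  exact sum_two h2 _ _ f

lemma had_rowr (r : Fin d) (hr0 : r ≠ I0 h2) (hr1 : r ≠ I1 h2) (f : Fin d → ℂ) :
    ∑ c, hadM h2 r c * f c = f r := by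
  have h : ∀ c, hadM h2 r c = (if c = r then (1:ℂ) else 0) := by
    intro c; simp [hadM, hr0, hr1]
  rw [Finset.sum_congr rfl (fun c _ => by rw [h c])]
  simp

end Had
end AvgImag

namespace AvgImag
variable {d : ℕ} (μ : Measure (G d)) [IsProbabilityMeasure μ]

lemma eq_zero_of_self_mul {w z : ℂ} (h : z = w * z) (hw : w ≠ 1) : z = 0 := by
  by_contra hz
  apply hw
  have h1 : w * z = 1 * z := by rw [one_mul, ← h]
  exact mul_right_cancel₀ hz h1

lemma neg_I_ne_one : (-Complex.I : ℂ) ≠ 1 := by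
  intro h
  have := congrArg Complex.im h
  simp at this

lemma neg_one_ne_one : (-1 : ℂ) ≠ 1 := by norm_num

lemma I_ne_one' : Complex.I ≠ 1 := by
  intro h
  have := congrArg Complex.im h
  simp at this

omit [IsProbabilityMeasure μ] in
lemma mom_comm₁₂ (hd : 0 < d) (j k l m : Fin d) :
    mom hd μ j k l m = mom hd μ k j l m := by
  unfold mom; congr 1; funext U; ring

omit [IsProbabilityMeasure μ] in
lemma mom_comm₃₄ (hd : 0 < d) (j k l m : Fin d) :
    mom hd μ j k l m = mom hd μ j k m l := by
  unfold mom; congr 1; funext U; ring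

section WithInv
variable (hd : 0 < d) (hinv : ∀ V : G d, Measure.map (fun U => V * U) μ = μ)

omit [IsProbabilityMeasure μ] in
include hinv in
/-- moments with unbalanced multiplicity at some index vanish : case (j j k k), j ≠ k -/
lemma mom_jjkk (j k : Fin d) (hjk : j ≠ k) : mom hd μ j j k k = 0 := by
  have h := mom_ph μ hd hinv j j j k k
  simp only [if_pos, if_neg hjk.symm, eq_self_iff_true, if_true, _root_.map_one, mul_one,
    Complex.I_mul_I] at h
  exact eq_zero_of_self_mul h neg_one_ne_one

omit [IsProbabilityMeasure μ] in
include hinv in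
/-- (j j j k), j ≠ k -/
lemma mom_jjjk (j k : Fin d) (hjk : j ≠ k) : mom hd μ j j j k = 0 := by
  have h := mom_ph μ hd hinv k j j j k
  simp only [if_pos, if_neg hjk, eq_self_iff_true, if_true, _root_.map_one, mul_one, one_mul,
    Complex.conj_I] at h
  exact eq_zero_of_self_mul h neg_I_ne_one

omit [IsProbabilityMeasure μ] in
include hinv in
/-- (j k j j), j ≠ k -/
lemma mom_jkjj (j k : Fin d) (hjk : j ≠ k) : mom hd μ j k j j = 0 := by
  have h := mom_ph μ hd hinv k j k j j
  simp only [if_pos, if_neg hjk, eq_self_iff_true, if_true, _root_.map_one, mul_one,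
    one_mul] at h
  exact eq_zero_of_self_mul h I_ne_one'

omit [IsProbabilityMeasure μ] in
include hinv in
/-- (j k k k), j ≠ k -/
lemma mom_jkkk (j k : Fin d) (hjk : j ≠ k) : mom hd μ j k k k = 0 := by
  have h := mom_ph μ hd hinv j j k k k
  simp only [if_pos, if_neg hjk.symm, eq_self_iff_true, if_true, _root_.map_one, mul_one,
    one_mul] at h
  exact eq_zero_of_self_mul h I_ne_one'

omit [IsProbabilityMeasure μ] in
include hinv in
/-- (j j k j), j ≠ k -/
lemma mom_jjkj (j k : Fin d) (hjk : j ≠ k) : mom hd μ j j k j = 0 := by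
  rw [mom_comm₃₄]
  exact mom_jjjk μ hd hinv j k hjk

omit [IsProbabilityMeasure μ] in
include hinv in
lemma mom_diag (j : Fin d) : mom hd μ j j j j = mom hd μ ⟨0, hd⟩ ⟨0, hd⟩ ⟨0, hd⟩ ⟨0, hd⟩ := by
  have h := mom_pm μ hd hinv (Equiv.swap (⟨0, hd⟩ : Fin d) j) ⟨0, hd⟩ ⟨0, hd⟩ ⟨0, hd⟩ ⟨0, hd⟩
  rw [h, Equiv.swap_apply_left]

end WithInv
end AvgImag

namespace AvgImag
variable {d : ℕ}

section Had2
variable (h2 : 1 < d)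

lemma hadM_star : star (hadM h2) = hadM h2 := by
  have hne := I0_ne_I1 h2
  ext r c
  simp only [Matrix.star_eq_conjTranspose, Matrix.conjTranspose_apply, hadM, Matrix.of_apply]
  by_cases h1 : r = I0 h2 <;> by_cases h2' : r = I1 h2 <;> by_cases h3 : c = I0 h2 <;>
    by_cases h4 : c = I1 h2 <;>
    simp_all [Complex.conj_ofReal, eq_comm, ite_eq_iff]

lemma had_mul_had : hadM h2 * hadM h2 = 1 := by
  have hne := I0_ne_I1 h2
  ext r s
  rw [Matrix.mul_apply]
  by_cases hr0 : r = I0 h2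
  · subst hr0
    rw [had_row0 h2 (fun c => hadM h2 c s)]
    by_cases hs0 : s = I0 h2
    · subst hs0
      simp only [hadM, Matrix.of_apply, if_pos, eq_self_iff_true, if_true, if_neg hne.symm,
        Matrix.one_apply_eq]
      linear_combination 2 * aa_mul_aa
    · by_cases hs1 : s = I1 h2
      · subst hs1
        simp only [hadM, Matrix.of_apply, if_pos, eq_self_iff_true, if_true, if_neg hne,
          if_neg hne.symm, Matrix.one_apply, if_neg (hne : ¬ I0 h2 = I1 h2)]
        ring
      · rw [Matrix.one_apply_ne (by exact fun h => hs0 h.symm)]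
        simp only [hadM, Matrix.of_apply, if_pos, eq_self_iff_true, if_true, if_neg hne.symm,
          if_neg hs0, if_neg hs1]
        ring
  · by_cases hr1 : r = I1 h2
    · subst hr1
      rw [had_row1 h2 (fun c => hadM h2 c s)]
      by_cases hs0 : s = I0 h2
      · subst hs0
        simp only [hadM, Matrix.of_apply, if_pos, eq_self_iff_true, if_true, if_neg hne.symm,
          Matrix.one_apply, if_neg (fun h => hne (h.symm ▸ rfl) : ¬ I1 h2 = I0 h2)]
        ring
      · by_cases hs1 : s = I1 h2
        · subst hs1
          simp only [hadM, Matrix.of_apply, if_pos, eq_self_iff_true, if_true, if_neg hne,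
            if_neg hne.symm, Matrix.one_apply_eq]
          linear_combination 2 * aa_mul_aa
        · rw [Matrix.one_apply_ne (by exact fun h => hs1 h.symm)]
          simp only [hadM, Matrix.of_apply, if_pos, eq_self_iff_true, if_true, if_neg hne,
            if_neg hne.symm, if_neg hs0, if_neg hs1]
          ring
    · rw [had_rowr h2 r hr0 hr1 (fun c => hadM h2 c s)]
      simp only [hadM, Matrix.of_apply, if_neg hr0, if_neg hr1, Matrix.one_apply]
      by_cases hs0 : s = I0 h2 <;> by_cases hs1 : s = I1 h2 <;>
        simp_all [eq_comm]

noncomputable def hadU : G d :=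
  ⟨hadM h2, by
    constructor
    · rw [hadM_star h2, had_mul_had h2]
    · rw [hadM_star h2, had_mul_had h2]⟩

lemma u_had0 (hd : 0 < d) (U : G d) :
    u hd (I0 h2) (hadU h2 * U) =
      (aa:ℂ) * u hd (I0 h2) U + (aa:ℂ) * u hd (I1 h2) U := by
  have h : u hd (I0 h2) (hadU h2 * U) =
      ∑ c, hadM h2 (I0 h2) c * (U : Matrix (Fin d) (Fin d) ℂ) c ⟨0, hd⟩ := rfl
  rw [h, had_row0 h2 (fun c => (U : Matrix (Fin d) (Fin d) ℂ) c ⟨0, hd⟩)]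
  rfl

end Had2
end AvgImag

namespace AvgImag
variable {d : ℕ} (μ : Measure (G d)) [IsProbabilityMeasure μ]

set_option maxHeartbeats 2000000 in
lemma A_eq_two_B (h2 : 1 < d) (hd : 0 < d)
    (hinv : ∀ V : G d, Measure.map (fun U => V * U) μ = μ) :
    mom hd μ (I0 h2) (I0 h2) (I0 h2) (I0 h2)
      = 2 * mom hd μ (I0 h2) (I1 h2) (I0 h2) (I1 h2) := by
  have hne := I0_ne_I1 h2
  set A := mom hd μ (I0 h2) (I0 h2) (I0 h2) (I0 h2) with hA
  set B := mom hd μ (I0 h2) (I1 h2) (I0 h2) (I1 h2) with hB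
  have key := integral_comp_mul_left μ hinv (hadU h2)
    (measurable_momFn hd (I0 h2) (I0 h2) (I0 h2) (I0 h2))
  set F : Fin 9 → (G d → ℂ) := ![
    fun U => u hd (I0 h2) U * u hd (I0 h2) U * (starRingEnd ℂ) (u hd (I0 h2) U) * (starRingEnd ℂ) (u hd (I0 h2) U),
    fun U => u hd (I1 h2) U * u hd (I1 h2) U * (starRingEnd ℂ) (u hd (I1 h2) U) * (starRingEnd ℂ) (u hd (I1 h2) U),
    fun U => (4 : ℂ) * (u hd (I0 h2) U * u hd (I1 h2) U * (starRingEnd ℂ) (u hd (I0 h2) U) * (starRingEnd ℂ) (u hd (I1 h2) U)),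
    fun U => u hd (I0 h2) U * u hd (I0 h2) U * (starRingEnd ℂ) (u hd (I1 h2) U) * (starRingEnd ℂ) (u hd (I1 h2) U),
    fun U => u hd (I1 h2) U * u hd (I1 h2) U * (starRingEnd ℂ) (u hd (I0 h2) U) * (starRingEnd ℂ) (u hd (I0 h2) U),
    fun U => (2 : ℂ) * (u hd (I0 h2) U * u hd (I0 h2) U * (starRingEnd ℂ) (u hd (I0 h2) U) * (starRingEnd ℂ) (u hd (I1 h2) U)),
    fun U => (2 : ℂ) * (u hd (I0 h2) U * u hd (I1 h2) U * (starRingEnd ℂ) (u hd (I0 h2) U) * (starRingEnd ℂ) (u hd (I0 h2) U)),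
    fun U => (2 : ℂ) * (u hd (I0 h2) U * u hd (I1 h2) U * (starRingEnd ℂ) (u hd (I1 h2) U) * (starRingEnd ℂ) (u hd (I1 h2) U)),
    fun U => (2 : ℂ) * (u hd (I1 h2) U * u hd (I1 h2) U * (starRingEnd ℂ) (u hd (I0 h2) U) * (starRingEnd ℂ) (u hd (I1 h2) U))] with hF
  have hFint : ∀ i : Fin 9, Integrable (F i) μ := by
    intro i
    fin_cases i <;> simp only [hF, Matrix.cons_val_zero, Matrix.cons_val_one, Matrix.head_cons,
      Matrix.cons_val_two, Matrix.tail_cons, Matrix.cons_val_three, Matrix.cons_val_four,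
      Matrix.cons_val_succ] <;>
      first
        | exact integrable_momFn μ hd _ _ _ _
        | exact (integrable_momFn μ hd _ _ _ _).const_mul _
  have hpt : ∀ U : G d,
      u hd (I0 h2) (hadU h2 * U) * u hd (I0 h2) (hadU h2 * U) *
        (starRingEnd ℂ) (u hd (I0 h2) (hadU h2 * U)) *
        (starRingEnd ℂ) (u hd (I0 h2) (hadU h2 * U))
      = (1/4 : ℂ) * ∑ i : Fin 9, F i U := by
    intro U
    rw [u_had0 h2 hd U]
    simp only [hF, Fin.sum_univ_succ, Finset.univ_eq_empty, Finset.sum_empty,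
      Matrix.cons_val_zero, Matrix.cons_val_one, Matrix.head_cons, Matrix.cons_val_succ,
      Fin.sum_univ_zero, _root_.map_add, _root_.map_mul, Complex.conj_ofReal]
    set x := u hd (I0 h2) U
    set y := u hd (I1 h2) U
    set cx := (starRingEnd ℂ) x
    set cy := (starRingEnd ℂ) y
    linear_combination (((aa:ℂ) * (aa:ℂ) + 1/2) *
      ((x + y) * (x + y) * (cx + cy) * (cx + cy))) * aa_mul_aa
  rw [funext hpt, integral_const_mul,
    integral_finset_sum Finset.univ (fun i _ => hFint i)] at key
  simp only [hF, Fin.sum_univ_succ, Fin.sum_univ_zero, Matrix.cons_val_zero, Matrix.cons_val_one,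
    Matrix.head_cons, Matrix.cons_val_succ, add_zero] at key
  rw [integral_const_mul, integral_const_mul, integral_const_mul, integral_const_mul,
    integral_const_mul] at key
  have e1 : ∫ U, u hd (I0 h2) U * u hd (I0 h2) U * (starRingEnd ℂ) (u hd (I0 h2) U) *
      (starRingEnd ℂ) (u hd (I0 h2) U) ∂μ = A := rfl
  have e2 : ∫ U, u hd (I1 h2) U * u hd (I1 h2) U * (starRingEnd ℂ) (u hd (I1 h2) U) *
      (starRingEnd ℂ) (u hd (I1 h2) U) ∂μ = A := by
    rw [hA, mom_pm μ hd hinv (Equiv.swap (I0 h2) (I1 h2)), Equiv.swap_apply_left]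
    rfl
  have e3 : ∫ U, u hd (I0 h2) U * u hd (I1 h2) U * (starRingEnd ℂ) (u hd (I0 h2) U) *
      (starRingEnd ℂ) (u hd (I1 h2) U) ∂μ = B := rfl
  have e4 : ∫ U, u hd (I0 h2) U * u hd (I0 h2) U * (starRingEnd ℂ) (u hd (I1 h2) U) *
      (starRingEnd ℂ) (u hd (I1 h2) U) ∂μ = 0 := mom_jjkk μ hd hinv _ _ hne
  have e5 : ∫ U, u hd (I1 h2) U * u hd (I1 h2) U * (starRingEnd ℂ) (u hd (I0 h2) U) *
      (starRingEnd ℂ) (u hd (I0 h2) U) ∂μ = 0 := mom_jjkk μ hd hinv _ _ hne.symm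
  have e6 : ∫ U, u hd (I0 h2) U * u hd (I0 h2) U * (starRingEnd ℂ) (u hd (I0 h2) U) *
      (starRingEnd ℂ) (u hd (I1 h2) U) ∂μ = 0 := mom_jjjk μ hd hinv _ _ hne
  have e7 : ∫ U, u hd (I0 h2) U * u hd (I1 h2) U * (starRingEnd ℂ) (u hd (I0 h2) U) *
      (starRingEnd ℂ) (u hd (I0 h2) U) ∂μ = 0 := mom_jkjj μ hd hinv _ _ hne
  have e8 : ∫ U, u hd (I0 h2) U * u hd (I1 h2) U * (starRingEnd ℂ) (u hd (I1 h2) U) *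
      (starRingEnd ℂ) (u hd (I1 h2) U) ∂μ = 0 := mom_jkkk μ hd hinv _ _ hne
  have e9 : ∫ U, u hd (I1 h2) U * u hd (I1 h2) U * (starRingEnd ℂ) (u hd (I0 h2) U) *
      (starRingEnd ℂ) (u hd (I1 h2) U) ∂μ = 0 := mom_jjkj μ hd hinv _ _ hne.symm
  rw [e1, e2, e3, e4, e5, e6, e7, e8, e9] at key
  linear_combination (-2 : ℂ) * key

end AvgImag

namespace AvgImag
variable {d : ℕ} (μ : Measure (G d)) [IsProbabilityMeasure μ]

omit [IsProbabilityMeasure μ] in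
lemma mom_offdiag (h2 : 1 < d) (hd : 0 < d)
    (hinv : ∀ V : G d, Measure.map (fun U => V * U) μ = μ)
    (j k : Fin d) (hjk : j ≠ k) :
    mom hd μ j k j k = mom hd μ (I0 h2) (I1 h2) (I0 h2) (I1 h2) := by
  set τ := Equiv.swap (I0 h2) j with hτ
  have hk : I0 h2 ≠ τ.symm k := by
    intro h
    apply hjk
    have h1 : τ (I0 h2) = k := by rw [h, Equiv.apply_symm_apply]
    rw [hτ, Equiv.swap_apply_left] at h1
    exact h1
  set σ := τ * Equiv.swap (I1 h2) (τ.symm k) with hσ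
  have h0 : σ (I0 h2) = j := by
    rw [hσ, Equiv.Perm.mul_apply,
      Equiv.swap_apply_of_ne_of_ne (I0_ne_I1 h2) hk, hτ, Equiv.swap_apply_left]
  have h1 : σ (I1 h2) = k := by
    rw [hσ, Equiv.Perm.mul_apply, Equiv.swap_apply_left, Equiv.apply_symm_apply]
  have h := mom_pm μ hd hinv σ (I0 h2) (I1 h2) (I0 h2) (I1 h2)
  rw [h0, h1] at h
  exact h.symm

lemma sum_Q (hd : 0 < d) :
    ∑ j, ∑ k, mom hd μ j k j k = 1 := by
  have h1 : ∀ j, ∑ k, mom hd μ j k j k = ∫ U, ∑ k, u hd j U * u hd k U *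
      (starRingEnd ℂ) (u hd j U) * (starRingEnd ℂ) (u hd k U) ∂μ := fun j =>
    (integral_finset_sum Finset.univ (fun k _ => integrable_momFn μ hd j k j k)).symm
  rw [Finset.sum_congr rfl (fun j _ => h1 j),
    ← integral_finset_sum Finset.univ (fun j _ => integrable_finset_sum Finset.univ
      (fun k _ => integrable_momFn μ hd j k j k))]
  have h2 : ∀ U : G d, ∑ j, ∑ k, u hd j U * u hd k U *
      (starRingEnd ℂ) (u hd j U) * (starRingEnd ℂ) (u hd k U) = 1 := by
    intro U
    have hs := sum_conj_mul hd U
    calc ∑ j, ∑ k, u hd j U * u hd k U *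
          (starRingEnd ℂ) (u hd j U) * (starRingEnd ℂ) (u hd k U)
        = (∑ j, (starRingEnd ℂ) (u hd j U) * u hd j U) *
          (∑ k, (starRingEnd ℂ) (u hd k U) * u hd k U) := by
          rw [Finset.sum_mul_sum]
          exact Finset.sum_congr rfl fun j _ => Finset.sum_congr rfl fun k _ => by ring
      _ = 1 := by rw [hs, one_mul]
  rw [funext h2]
  simp

lemma A_val (hd : 0 < d)
    (hinv : ∀ V : G d, Measure.map (fun U => V * U) μ = μ) :
    mom hd μ ⟨0, hd⟩ ⟨0, hd⟩ ⟨0, hd⟩ ⟨0, hd⟩ = 2 / ((d : ℂ) * ((d : ℂ) + 1)) := by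
  rcases Nat.lt_or_ge 1 d with h2 | h1
  · -- d ≥ 2
    have hI0 : I0 h2 = (⟨0, hd⟩ : Fin d) := rfl
    set A := mom hd μ ⟨0, hd⟩ ⟨0, hd⟩ ⟨0, hd⟩ ⟨0, hd⟩ with hA
    set B := mom hd μ (I0 h2) (I1 h2) (I0 h2) (I1 h2) with hB
    have hAB : A = 2 * B := by rw [hA, ← hI0]; exact A_eq_two_B μ h2 hd hinv
    have hrow : ∀ j : Fin d, ∑ k, mom hd μ j k j k = A + ((d : ℂ) - 1) * B := by
      intro j
      rw [← Finset.add_sum_erase _ _ (Finset.mem_univ j)]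
      congr 1
      · exact mom_diag μ hd hinv j
      · rw [Finset.sum_congr rfl (fun k hk =>
          mom_offdiag μ h2 hd hinv j k (Finset.ne_of_mem_erase hk).symm),
          Finset.sum_const, Finset.card_erase_of_mem (Finset.mem_univ j),
          Finset.card_univ, Fintype.card_fin, nsmul_eq_mul]
        congr 1
        rw [Nat.cast_sub hd, Nat.cast_one]
    have htot := sum_Q μ hd
    rw [Finset.sum_congr rfl (fun j _ => hrow j), Finset.sum_const, Finset.card_univ,
      Fintype.card_fin, nsmul_eq_mul] at htot
    have hd0 : (d : ℂ) ≠ 0 := Nat.cast_ne_zero.mpr hd.ne'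
    have hd1 : (d : ℂ) + 1 ≠ 0 := by
      have h : ((d + 1 : ℕ) : ℂ) ≠ 0 := Nat.cast_ne_zero.mpr (Nat.succ_ne_zero d)
      push_cast at h
      exact h
    rw [eq_div_iff (mul_ne_zero hd0 hd1)]
    linear_combination 2 * htot + (d:ℂ) * ((d:ℂ) - 1) * hAB
  · -- d = 1
    have hd1 : d = 1 := le_antisymm h1 hd
    subst hd1
    have hone : ∀ U : G 1,
        u hd ⟨0, hd⟩ U * u hd ⟨0, hd⟩ U * (starRingEnd ℂ) (u hd ⟨0, hd⟩ U) *
          (starRingEnd ℂ) (u hd ⟨0, hd⟩ U) = 1 := by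
      intro U
      have hs := sum_conj_mul hd U
      rw [Fin.sum_univ_one] at hs
      have h0 : (0 : Fin 1) = ⟨0, hd⟩ := rfl
      rw [h0] at hs
      linear_combination ((starRingEnd ℂ) (u hd ⟨0, hd⟩ U) * u hd ⟨0, hd⟩ U + 1) * hs
    rw [mom, funext hone]
    norm_num

end AvgImag

namespace AvgImag
variable {d : ℕ} (μ : Measure (G d)) [IsProbabilityMeasure μ]

lemma E_val (hd : 0 < d)
    (hinv : ∀ V : G d, Measure.map (fun U => V * U) μ = μ) :
    ∫ U, (∑ k, (starRingEnd ℂ) (u hd k U) * (starRingEnd ℂ) (u hd k U)) *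
      (starRingEnd ℂ) (∑ k, (starRingEnd ℂ) (u hd k U) * (starRingEnd ℂ) (u hd k U)) ∂μ
      = 2 / ((d : ℂ) + 1) := by
  have hpt : ∀ U : G d,
      (∑ k, (starRingEnd ℂ) (u hd k U) * (starRingEnd ℂ) (u hd k U)) *
        (starRingEnd ℂ) (∑ k, (starRingEnd ℂ) (u hd k U) * (starRingEnd ℂ) (u hd k U))
      = ∑ j, ∑ k, u hd k U * u hd k U * (starRingEnd ℂ) (u hd j U) *
          (starRingEnd ℂ) (u hd j U) := by
    intro U
    rw [map_sum]
    simp only [_root_.map_mul, Complex.conj_conj]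
    rw [Finset.sum_mul_sum]
    exact Finset.sum_congr rfl fun j _ => Finset.sum_congr rfl fun k _ => by ring
  rw [funext hpt, integral_finset_sum Finset.univ (fun j _ => integrable_finset_sum
    Finset.univ (fun k _ => integrable_momFn μ hd k k j j))]
  have hrow : ∀ j : Fin d, (∫ U, ∑ k, u hd k U * u hd k U * (starRingEnd ℂ) (u hd j U) *
      (starRingEnd ℂ) (u hd j U) ∂μ) = mom hd μ ⟨0, hd⟩ ⟨0, hd⟩ ⟨0, hd⟩ ⟨0, hd⟩ := by
    intro j
    rw [integral_finset_sum Finset.univ (fun k _ => integrable_momFn μ hd k k j j)]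
    have : ∀ k : Fin d, (∫ U, u hd k U * u hd k U * (starRingEnd ℂ) (u hd j U) *
        (starRingEnd ℂ) (u hd j U) ∂μ) = mom hd μ k k j j := fun k => rfl
    rw [Finset.sum_congr rfl (fun k _ => this k),
      ← Finset.add_sum_erase _ _ (Finset.mem_univ j)]
    rw [Finset.sum_congr rfl (fun k hk =>
        mom_jjkk μ hd hinv k j (Finset.ne_of_mem_erase hk)),
      Finset.sum_const, smul_zero, add_zero]
    exact mom_diag μ hd hinv j
  rw [Finset.sum_congr rfl (fun j _ => hrow j), Finset.sum_const, Finset.card_univ,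
    Fintype.card_fin, nsmul_eq_mul, A_val μ hd hinv]
  have hd0 : (d : ℂ) ≠ 0 := Nat.cast_ne_zero.mpr hd.ne'
  have hd1 : (d : ℂ) + 1 ≠ 0 := by
    have h : ((d + 1 : ℕ) : ℂ) ≠ 0 := Nat.cast_ne_zero.mpr (Nat.succ_ne_zero d)
    push_cast at h
    exact h
  field_simp

end AvgImag

open AvgImag in
/-- The average imaginarity `1 - |⟨ψ_U|ψ_U*⟩|²` of `ψ_U = U|0⟩` over the Haar
(i.e. left-invariant probability) measure on the unitary group `U(ℂ^d)` equals
`1 - 2/(d+1)`. -/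
theorem average_imaginarity_haar_states (d : ℕ) (hd : 0 < d)
    (μ : Measure (Matrix.unitaryGroup (Fin d) ℂ)) [IsProbabilityMeasure μ]
    (hinv : ∀ V : Matrix.unitaryGroup (Fin d) ℂ,
      Measure.map (fun U => V * U) μ = μ) :
    ∫ U : Matrix.unitaryGroup (Fin d) ℂ,
        (1 - ‖∑ k, starRingEnd ℂ ((U : Matrix (Fin d) (Fin d) ℂ) k ⟨0, hd⟩) *
            starRingEnd ℂ ((U : Matrix (Fin d) (Fin d) ℂ) k ⟨0, hd⟩)‖ ^ 2) ∂μ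
      = 1 - 2 / ((d : ℝ) + 1) := by
  have hW : (fun U : G d => ∑ k, starRingEnd ℂ ((U : Matrix (Fin d) (Fin d) ℂ) k ⟨0, hd⟩) *
      starRingEnd ℂ ((U : Matrix (Fin d) (Fin d) ℂ) k ⟨0, hd⟩))
      = fun U : G d => ∑ k, (starRingEnd ℂ) (u hd k U) * (starRingEnd ℂ) (u hd k U) := rfl
  set W := fun U : G d => ∑ k, (starRingEnd ℂ) (u hd k U) * (starRingEnd ℂ) (u hd k U) with hWdef
  have hWmeas : Measurable W := by
    apply Finset.measurable_sum
    intro k _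
    exact (Complex.continuous_conj.measurable.comp (measurable_u hd k)).mul
      (Complex.continuous_conj.measurable.comp (measurable_u hd k))
  have hWb : ∀ U, ‖W U‖ ≤ (d : ℝ) := by
    intro U
    calc ‖W U‖ ≤ ∑ k : Fin d, ‖(starRingEnd ℂ) (u hd k U) * (starRingEnd ℂ) (u hd k U)‖ :=
          norm_sum_le _ _
      _ ≤ ∑ _k : Fin d, (1:ℝ) := by
          apply Finset.sum_le_sum
          intro k _
          rw [norm_mul, RingHomIsometric.norm_map]
          have h := norm_u_le hd k U
          nlinarith [norm_nonneg (u hd k U)]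
      _ = (d : ℝ) := by simp
  have hWnn : ∀ U, (0:ℝ) ≤ ‖W U‖ := fun U => norm_nonneg _
  have hg : Integrable (fun U => W U * (starRingEnd ℂ) (W U)) μ := by
    refine (integrable_const ((d:ℝ) * (d:ℝ))).mono'
      ((hWmeas.mul (Complex.continuous_conj.measurable.comp hWmeas)).aestronglyMeasurable) ?_
    filter_upwards with U
    rw [norm_mul, RingHomIsometric.norm_map]
    exact mul_le_mul (hWb U) (hWb U) (hWnn U) (Nat.cast_nonneg d)
  have hsq : Integrable (fun U => ‖W U‖ ^ 2) μ := by
    refine (integrable_const ((d:ℝ) ^ 2)).mono'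
      ((hWmeas.norm.pow_const 2).aestronglyMeasurable) ?_
    filter_upwards with U
    rw [Real.norm_eq_abs, abs_of_nonneg (by positivity)]
    exact pow_le_pow_left₀ (hWnn U) (hWb U) 2
  show (∫ U : G d, (1 - ‖W U‖ ^ 2) ∂μ) = 1 - 2 / ((d:ℝ) + 1)
  rw [integral_sub (integrable_const 1) hsq, integral_const]
  simp only [measure_univ, probReal_univ, one_smul, smul_eq_mul, mul_one]
  have hre : ∀ U, ‖W U‖ ^ 2 = (W U * (starRingEnd ℂ) (W U)).re := by
    intro U
    rw [Complex.mul_conj]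
    rw [Complex.ofReal_re, Complex.sq_norm]
  rw [funext hre]
  have hint := integral_re (μ := μ) (f := fun U => W U * (starRingEnd ℂ) (W U)) hg
  simp only [RCLike.re_to_complex] at hint
  rw [hint, E_val μ hd hinv]
  have : (2 / ((d : ℂ) + 1)) = ((2 / ((d : ℝ) + 1) : ℝ) : ℂ) := by push_cast; ring
  rw [this, Complex.ofReal_re]
end

section
/- The average imaginarity of Haar-random unitaries satisfies ∫ I(U) dη(U) = 1 - 2/(d(d+1)), where I(U) = 1 - d^{-2}|tr(Uᵀ U)|² and η is the Haar measure on U(ℂ^d), d ≥ 2. -/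
open Matrix MeasureTheory
open scoped ComplexConjugate

namespace AvgImag

variable {d : ℕ}

abbrev UG (d : ℕ) := Matrix.unitaryGroup (Fin d) ℂ

def ent (U : UG d) (a b : Fin d) : ℂ := (U : Matrix (Fin d) (Fin d) ℂ) a b

lemma measurable_ent (a b : Fin d) : Measurable (fun U : UG d => ent U a b) :=
  (show Measurable (fun U : UG d => (U : Matrix (Fin d) (Fin d) ℂ)) from
    measurable_subtype_coe).eval.eval

lemma sum_normSq (U : UG d) (b : Fin d) :
    ∑ k, ‖ent U k b‖ ^ 2 = 1 := by
  have h := U.2.1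
  have h2 := congrFun (congrFun h b) b
  rw [Matrix.mul_apply, Matrix.one_apply_eq] at h2
  have : ∀ k, (star (U : Matrix (Fin d) (Fin d) ℂ)) b k * (U : Matrix _ _ ℂ) k b
      = ((‖ent U k b‖ ^ 2 : ℝ) : ℂ) := by
    intro k
    rw [Matrix.star_apply]
    simp [ent, Complex.star_def, Complex.mul_conj', Complex.conj_mul']
  rw [Finset.sum_congr rfl (fun k _ => this k)] at h2
  have := h2
  push_cast at this
  exact_mod_cast this

lemma norm_ent_le_one (U : UG d) (a b : Fin d) : ‖ent U a b‖ ≤ 1 := by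
  have h := sum_normSq U b
  have h1 : ‖ent U a b‖ ^ 2 ≤ 1 := by
    rw [← h]
    exact Finset.single_le_sum (f := fun k => ‖ent U k b‖ ^ 2)
      (fun k _ => by positivity) (Finset.mem_univ a)
  nlinarith [norm_nonneg (ent U a b)]

def m4 (a₁ b₁ a₂ b₂ c₁ e₁ c₂ e₂ : Fin d) (U : UG d) : ℂ :=
  ent U a₁ b₁ * ent U a₂ b₂ * conj (ent U c₁ e₁) * conj (ent U c₂ e₂)

lemma measurable_m4 (a₁ b₁ a₂ b₂ c₁ e₁ c₂ e₂ : Fin d) :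
    Measurable (m4 (d := d) a₁ b₁ a₂ b₂ c₁ e₁ c₂ e₂) := by
  unfold m4
  exact (((measurable_ent a₁ b₁).mul (measurable_ent a₂ b₂)).mul
    ((RCLike.continuous_conj.measurable).comp (measurable_ent c₁ e₁))).mul
    ((RCLike.continuous_conj.measurable).comp (measurable_ent c₂ e₂))

lemma norm_m4_le_one (a₁ b₁ a₂ b₂ c₁ e₁ c₂ e₂ : Fin d) (U : UG d) :
    ‖m4 a₁ b₁ a₂ b₂ c₁ e₁ c₂ e₂ U‖ ≤ 1 := by
  unfold m4
  simp only [norm_mul, RCLike.norm_conj]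
  have h1 := norm_ent_le_one U a₁ b₁
  have h2 := norm_ent_le_one U a₂ b₂
  have h3 := norm_ent_le_one U c₁ e₁
  have h4 := norm_ent_le_one U c₂ e₂
  exact mul_le_one₀ (mul_le_one₀ (mul_le_one₀ h1 (norm_nonneg _) h2)
    (norm_nonneg _) h3) (norm_nonneg _) h4

variable (μ : Measure (UG d)) [IsProbabilityMeasure μ]

lemma integrable_m4 (a₁ b₁ a₂ b₂ c₁ e₁ c₂ e₂ : Fin d) :
    Integrable (m4 a₁ b₁ a₂ b₂ c₁ e₁ c₂ e₂) μ :=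
  (integrable_const 1).mono'
    (measurable_m4 a₁ b₁ a₂ b₂ c₁ e₁ c₂ e₂).aestronglyMeasurable
    (Filter.Eventually.of_forall (norm_m4_le_one a₁ b₁ a₂ b₂ c₁ e₁ c₂ e₂))

variable (hinv : ∀ V : UG d, Measure.map (fun U => V * U) μ = μ)

lemma measurable_mulL (V : UG d) : Measurable (fun U : UG d => V * U) := by
  have h : Measurable (fun U : UG d =>
      ((V : Matrix (Fin d) (Fin d) ℂ) * (U : Matrix (Fin d) (Fin d) ℂ))) := by
    apply measurable_pi_lambda
    intro i
    apply measurable_pi_lambda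
    intro j
    simp only [Matrix.mul_apply]
    exact Finset.measurable_sum _ (fun k _ => (measurable_ent k j).const_mul _)
  exact h.subtype_mk

include hinv in
lemma integral_inv (V : UG d) {f : UG d → ℂ} (hf : Measurable f) :
    ∫ U, f (V * U) ∂μ = ∫ U, f U ∂μ := by
  conv_rhs => rw [← hinv V]
  rw [integral_map (measurable_mulL V).aemeasurable]
  rw [hinv V]
  exact hf.aestronglyMeasurable

def diagU (w : Fin d → ℂ) (hw : ∀ k, ‖w k‖ = 1) : UG d :=
  ⟨Matrix.diagonal w, by
    rw [Matrix.mem_unitaryGroup_iff, Matrix.star_eq_conjTranspose,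
      Matrix.diagonal_conjTranspose, Matrix.diagonal_mul_diagonal]
    have hdiag : (fun i => w i * star w i) = (1 : Fin d → ℂ) := by
      funext k
      simp only [Pi.one_apply, Pi.star_apply]
      have h1 : Complex.normSq (w k) = 1 := by
        rw [Complex.normSq_eq_norm_sq, hw k]; norm_num
      rw [Complex.star_def, Complex.mul_conj, h1]
      norm_num
    rw [hdiag]
    exact Matrix.diagonal_one⟩

lemma ent_diag_mul (w : Fin d → ℂ) (hw : ∀ k, ‖w k‖ = 1) (a b : Fin d) (U : UG d) :
    ent (diagU w hw * U) a b = w a * ent U a b := by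
  show ((diagU w hw * U : UG d) : Matrix (Fin d) (Fin d) ℂ) a b = _
  rw [Matrix.UnitaryGroup.mul_val]
  show (Matrix.diagonal w * (U : Matrix (Fin d) (Fin d) ℂ)) a b = _
  rw [Matrix.diagonal_mul]
  rfl

include hinv in
lemma phase_vanish (a₁ b₁ a₂ b₂ c₁ e₁ c₂ e₂ : Fin d) (w : Fin d → ℂ)
    (hw : ∀ k, ‖w k‖ = 1)
    (hK : w a₁ * w a₂ * conj (w c₁) * conj (w c₂) ≠ 1) :
    ∫ U, m4 a₁ b₁ a₂ b₂ c₁ e₁ c₂ e₂ U ∂μ = 0 := by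
  set K := w a₁ * w a₂ * conj (w c₁) * conj (w c₂) with hKdef
  have key := integral_inv μ hinv (diagU w hw) (measurable_m4 a₁ b₁ a₂ b₂ c₁ e₁ c₂ e₂)
  have hpt : ∀ U : UG d, m4 a₁ b₁ a₂ b₂ c₁ e₁ c₂ e₂ (diagU w hw * U)
      = K * m4 a₁ b₁ a₂ b₂ c₁ e₁ c₂ e₂ U := by
    intro U
    unfold m4
    rw [ent_diag_mul, ent_diag_mul, ent_diag_mul, ent_diag_mul, hKdef]
    rw [_root_.map_mul, _root_.map_mul]
    ring
  rw [integral_congr_ae (Filter.Eventually.of_forall hpt), integral_const_mul] at key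
  have : (K - 1) * ∫ U, m4 a₁ b₁ a₂ b₂ c₁ e₁ c₂ e₂ U ∂μ = 0 := by
    rw [sub_mul, key]; ring
  rcases mul_eq_zero.1 this with h | h
  · exact absurd (by linear_combination h : K = 1) hK
  · exact h

noncomputable def rotM (a c : Fin d) : Matrix (Fin d) (Fin d) ℂ := fun i j =>
  if i = a then (if j = a then (3/5:ℂ) else if j = c then -(4/5:ℂ) else 0)
  else if i = c then (if j = a then (4/5:ℂ) else if j = c then (3/5:ℂ) else 0)
  else if i = j then 1 else 0

lemma rot_row_a (a c j : Fin d) :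
    rotM a c a j = if j = a then (3/5:ℂ) else if j = c then -(4/5:ℂ) else 0 := by
  simp [rotM]

lemma rot_row_c (a c j : Fin d) (hac : a ≠ c) :
    rotM a c c j = if j = a then (4/5:ℂ) else if j = c then (3/5:ℂ) else 0 := by
  simp [rotM, Ne.symm hac]

lemma rot_row_other (a c : Fin d) (k j : Fin d) (hka : k ≠ a) (hkc : k ≠ c) :
    rotM a c k j = if k = j then 1 else 0 := by
  simp [rotM, hka, hkc]

lemma rot_star (a c i k : Fin d) : (star (rotM a c)) i k = rotM a c k i := by
  rw [Matrix.star_apply, rotM]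
  split_ifs <;> simp

lemma rot_mem (a c : Fin d) (hac : a ≠ c) : rotM a c ∈ Matrix.unitaryGroup (Fin d) ℂ := by
  rw [Matrix.mem_unitaryGroup_iff']
  ext i j
  rw [Matrix.mul_apply, Matrix.one_apply]
  have hcmem : c ∈ Finset.univ.erase a := by
    simp [Finset.mem_erase, Ne.symm hac]
  rw [Finset.sum_congr rfl (fun k _ => by rw [rot_star] :
    ∀ k ∈ Finset.univ, (star (rotM a c)) i k * rotM a c k j
      = rotM a c k i * rotM a c k j)]
  rw [← Finset.sum_erase_add _ _ (Finset.mem_univ a),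
    ← Finset.sum_erase_add _ _ hcmem]
  have hSsum : (∑ k ∈ (Finset.univ.erase a).erase c, rotM a c k i * rotM a c k j)
      = if (i ≠ c ∧ i ≠ a) ∧ i = j then (1:ℂ) else 0 := by
    rw [show (if (i ≠ c ∧ i ≠ a) ∧ i = j then (1:ℂ) else 0)
        = if i ∈ (Finset.univ.erase a).erase c then (if i = j then (1:ℂ) else 0) else 0 by
      by_cases h1 : i ≠ c ∧ i ≠ a <;> by_cases h2 : i = j <;>
        simp [Finset.mem_erase, h1, h2]]
    rw [← Finset.sum_ite_eq' ((Finset.univ.erase a).erase c) i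
      (fun _ => if i = j then (1:ℂ) else 0)]
    apply Finset.sum_congr rfl
    intro k hk
    have hkc : k ≠ c := (Finset.mem_erase.1 hk).1
    have hka : k ≠ a := (Finset.mem_erase.1 (Finset.mem_erase.1 hk).2).1
    rw [rot_row_other a c k i hka hkc, rot_row_other a c k j hka hkc]
    by_cases hki : k = i
    · subst hki
      simp
    · simp [hki]
  rw [hSsum, rot_row_a, rot_row_a, rot_row_c _ _ _ hac, rot_row_c _ _ _ hac]
  by_cases hia : i = a <;> by_cases hic : i = c <;>
    by_cases hja : j = a <;> by_cases hjc : j = c <;> by_cases hij : i = j <;>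
    simp_all <;> norm_num

lemma ent_rot_a (a c : Fin d) (hac : a ≠ c) (U : UG d) (b : Fin d) :
    ent ((⟨rotM a c, rot_mem a c hac⟩ : UG d) * U) a b
      = 3/5 * ent U a b - 4/5 * ent U c b := by
  show ((_ : UG d) : Matrix (Fin d) (Fin d) ℂ) a b = _
  rw [Matrix.UnitaryGroup.mul_val]
  show (rotM a c * (U : Matrix (Fin d) (Fin d) ℂ)) a b = _
  rw [Matrix.mul_apply]
  have h1 : ∀ k ∈ Finset.univ, rotM a c a k * (U : Matrix (Fin d) (Fin d) ℂ) k b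
      = (if k = a then (3/5:ℂ) * ent U k b else 0)
        + (if k = c then (-(4/5):ℂ) * ent U k b else 0) := by
    intro k _
    rw [rot_row_a]
    by_cases hka : k = a
    · subst hka
      simp [ent, hac]
    · by_cases hkc : k = c
      · subst hkc
        simp [ent, hka]
      · simp [ent, hka, hkc]
  rw [Finset.sum_congr rfl h1, Finset.sum_add_distrib,
    Finset.sum_ite_eq' Finset.univ a (fun k => (3/5:ℂ) * ent U k b),
    Finset.sum_ite_eq' Finset.univ c (fun k => (-(4/5):ℂ) * ent U k b)]
  simp
  ring

lemma ent_rot_c (a c : Fin d) (hac : a ≠ c) (U : UG d) (b : Fin d) :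
    ent ((⟨rotM a c, rot_mem a c hac⟩ : UG d) * U) c b
      = 4/5 * ent U a b + 3/5 * ent U c b := by
  show ((_ : UG d) : Matrix (Fin d) (Fin d) ℂ) c b = _
  rw [Matrix.UnitaryGroup.mul_val]
  show (rotM a c * (U : Matrix (Fin d) (Fin d) ℂ)) c b = _
  rw [Matrix.mul_apply]
  have h1 : ∀ k ∈ Finset.univ, rotM a c c k * (U : Matrix (Fin d) (Fin d) ℂ) k b
      = (if k = a then (4/5:ℂ) * ent U k b else 0)
        + (if k = c then ((3/5):ℂ) * ent U k b else 0) := by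
    intro k _
    rw [rot_row_c _ _ _ hac]
    by_cases hka : k = a
    · subst hka
      simp [ent, hac]
    · by_cases hkc : k = c
      · subst hkc
        simp [ent, hka]
      · simp [ent, hka, hkc]
  rw [Finset.sum_congr rfl h1, Finset.sum_add_distrib,
    Finset.sum_ite_eq' Finset.univ a (fun k => (4/5:ℂ) * ent U k b),
    Finset.sum_ite_eq' Finset.univ c (fun k => ((3/5):ℂ) * ent U k b)]
  simp

lemma integral_nine (g₁ g₂ g₃ g₄ g₅ g₆ g₇ g₈ g₉ : UG d → ℂ)
    (h₁ : Integrable g₁ μ) (h₂ : Integrable g₂ μ) (h₃ : Integrable g₃ μ)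
    (h₄ : Integrable g₄ μ) (h₅ : Integrable g₅ μ) (h₆ : Integrable g₆ μ)
    (h₇ : Integrable g₇ μ) (h₈ : Integrable g₈ μ) (h₉ : Integrable g₉ μ) :
    ∫ U, (g₁ U + g₂ U + g₃ U + g₄ U + g₅ U + g₆ U + g₇ U + g₈ U + g₉ U) ∂μ
      = (∫ U, g₁ U ∂μ) + (∫ U, g₂ U ∂μ) + (∫ U, g₃ U ∂μ) + (∫ U, g₄ U ∂μ)
        + (∫ U, g₅ U ∂μ) + (∫ U, g₆ U ∂μ) + (∫ U, g₇ U ∂μ) + (∫ U, g₈ U ∂μ)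
        + (∫ U, g₉ U ∂μ) := by
  have h12 : Integrable (fun U => g₁ U + g₂ U) μ := h₁.add h₂
  have h13 : Integrable (fun U => g₁ U + g₂ U + g₃ U) μ := h12.add h₃
  have h14 : Integrable (fun U => g₁ U + g₂ U + g₃ U + g₄ U) μ := h13.add h₄
  have h15 : Integrable (fun U => g₁ U + g₂ U + g₃ U + g₄ U + g₅ U) μ := h14.add h₅
  have h16 : Integrable (fun U => g₁ U + g₂ U + g₃ U + g₄ U + g₅ U + g₆ U) μ := h15.add h₆
  have h17 : Integrable (fun U => g₁ U + g₂ U + g₃ U + g₄ U + g₅ U + g₆ U + g₇ U) μ :=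
    h16.add h₇
  have h18 : Integrable (fun U => g₁ U + g₂ U + g₃ U + g₄ U + g₅ U + g₆ U + g₇ U + g₈ U) μ :=
    h17.add h₈
  rw [integral_add h18 h₉, integral_add h17 h₈, integral_add h16 h₇, integral_add h15 h₆,
    integral_add h14 h₅, integral_add h13 h₄, integral_add h12 h₃, integral_add h₁ h₂]

include hinv in
lemma rot_rel (a c : Fin d) (hac : a ≠ c) (b e : Fin d) :
    (∫ U, m4 a b a b a e a e U ∂μ) = (∫ U, m4 c b c b c e c e U ∂μ) ∧
    (∫ U, m4 a b c b a e c e U ∂μ) = (1/2) * ∫ U, m4 a b a b a e a e U ∂μ := by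
  set R : UG d := ⟨rotM a c, rot_mem a c hac⟩ with hR
  have hwnorm : ∀ k : Fin d, ‖(if k = a then Complex.I else 1 : ℂ)‖ = 1 := by
    intro k; split_ifs <;> simp
  have hz1 : ∫ U, m4 a b a b a e c e U ∂μ = 0 :=
    phase_vanish μ hinv _ _ _ _ _ _ _ _ _ hwnorm
      (by norm_num [Ne.symm hac, Complex.ext_iff])
  have hz2 : ∫ U, m4 a b a b c e c e U ∂μ = 0 :=
    phase_vanish μ hinv _ _ _ _ _ _ _ _ _ hwnorm
      (by norm_num [Ne.symm hac, Complex.ext_iff])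
  have hz3 : ∫ U, m4 a b c b a e a e U ∂μ = 0 :=
    phase_vanish μ hinv _ _ _ _ _ _ _ _ _ hwnorm
      (by norm_num [Ne.symm hac, Complex.ext_iff])
  have hz4 : ∫ U, m4 a b c b c e c e U ∂μ = 0 :=
    phase_vanish μ hinv _ _ _ _ _ _ _ _ _ hwnorm
      (by norm_num [Ne.symm hac, Complex.ext_iff])
  have hz5 : ∫ U, m4 c b c b a e c e U ∂μ = 0 :=
    phase_vanish μ hinv _ _ _ _ _ _ _ _ _ hwnorm
      (by norm_num [Ne.symm hac, Complex.ext_iff])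
  have hz6 : ∫ U, m4 c b c b a e a e U ∂μ = 0 :=
    phase_vanish μ hinv _ _ _ _ _ _ _ _ _ hwnorm
      (by norm_num [Ne.symm hac, Complex.ext_iff])
  have inv1 := integral_inv μ hinv R (measurable_m4 a b a b a e a e)
  have inv2 := integral_inv μ hinv R (measurable_m4 c b c b c e c e)
  have hpt1 : ∀ U, m4 a b a b a e a e (R * U)
      = (81/625 : ℂ) * m4 a b a b a e a e U + (-216/625 : ℂ) * m4 a b a b a e c e U
        + (144/625 : ℂ) * m4 a b a b c e c e U + (-216/625 : ℂ) * m4 a b c b a e a e U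
        + (576/625 : ℂ) * m4 a b c b a e c e U + (-384/625 : ℂ) * m4 a b c b c e c e U
        + (144/625 : ℂ) * m4 c b c b a e a e U + (-384/625 : ℂ) * m4 c b c b a e c e U
        + (256/625 : ℂ) * m4 c b c b c e c e U := by
    intro U
    unfold m4
    rw [ent_rot_a a c hac U b, ent_rot_a a c hac U e]
    simp only [map_sub, _root_.map_mul, map_div₀, Complex.conj_ofNat]
    ring
  have hpt2 : ∀ U, m4 c b c b c e c e (R * U)
      = (256/625 : ℂ) * m4 a b a b a e a e U + (384/625 : ℂ) * m4 a b a b a e c e U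
        + (144/625 : ℂ) * m4 a b a b c e c e U + (384/625 : ℂ) * m4 a b c b a e a e U
        + (576/625 : ℂ) * m4 a b c b a e c e U + (216/625 : ℂ) * m4 a b c b c e c e U
        + (144/625 : ℂ) * m4 c b c b a e a e U + (216/625 : ℂ) * m4 c b c b a e c e U
        + (81/625 : ℂ) * m4 c b c b c e c e U := by
    intro U
    unfold m4
    rw [ent_rot_c a c hac U b, ent_rot_c a c hac U e]
    simp only [map_add, _root_.map_mul, map_div₀, Complex.conj_ofNat]
    ring
  have expand1 : ∫ U, m4 a b a b a e a e (R * U) ∂μ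
      = (81/625 : ℂ) * (∫ U, m4 a b a b a e a e U ∂μ)
        + (-216/625 : ℂ) * (∫ U, m4 a b a b a e c e U ∂μ)
        + (144/625 : ℂ) * (∫ U, m4 a b a b c e c e U ∂μ)
        + (-216/625 : ℂ) * (∫ U, m4 a b c b a e a e U ∂μ)
        + (576/625 : ℂ) * (∫ U, m4 a b c b a e c e U ∂μ)
        + (-384/625 : ℂ) * (∫ U, m4 a b c b c e c e U ∂μ)
        + (144/625 : ℂ) * (∫ U, m4 c b c b a e a e U ∂μ)
        + (-384/625 : ℂ) * (∫ U, m4 c b c b a e c e U ∂μ)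
        + (256/625 : ℂ) * (∫ U, m4 c b c b c e c e U ∂μ) := by
    rw [integral_congr_ae (Filter.Eventually.of_forall hpt1),
      integral_nine μ _ _ _ _ _ _ _ _ _
        ((integrable_m4 μ a b a b a e a e).const_mul _)
        ((integrable_m4 μ a b a b a e c e).const_mul _)
        ((integrable_m4 μ a b a b c e c e).const_mul _)
        ((integrable_m4 μ a b c b a e a e).const_mul _)
        ((integrable_m4 μ a b c b a e c e).const_mul _)
        ((integrable_m4 μ a b c b c e c e).const_mul _)
        ((integrable_m4 μ c b c b a e a e).const_mul _)
        ((integrable_m4 μ c b c b a e c e).const_mul _)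
        ((integrable_m4 μ c b c b c e c e).const_mul _)]
    simp only [integral_const_mul]
  have expand2 : ∫ U, m4 c b c b c e c e (R * U) ∂μ
      = (256/625 : ℂ) * (∫ U, m4 a b a b a e a e U ∂μ)
        + (384/625 : ℂ) * (∫ U, m4 a b a b a e c e U ∂μ)
        + (144/625 : ℂ) * (∫ U, m4 a b a b c e c e U ∂μ)
        + (384/625 : ℂ) * (∫ U, m4 a b c b a e a e U ∂μ)
        + (576/625 : ℂ) * (∫ U, m4 a b c b a e c e U ∂μ)
        + (216/625 : ℂ) * (∫ U, m4 a b c b c e c e U ∂μ)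
        + (144/625 : ℂ) * (∫ U, m4 c b c b a e a e U ∂μ)
        + (216/625 : ℂ) * (∫ U, m4 c b c b a e c e U ∂μ)
        + (81/625 : ℂ) * (∫ U, m4 c b c b c e c e U ∂μ) := by
    rw [integral_congr_ae (Filter.Eventually.of_forall hpt2),
      integral_nine μ _ _ _ _ _ _ _ _ _
        ((integrable_m4 μ a b a b a e a e).const_mul _)
        ((integrable_m4 μ a b a b a e c e).const_mul _)
        ((integrable_m4 μ a b a b c e c e).const_mul _)
        ((integrable_m4 μ a b c b a e a e).const_mul _)
        ((integrable_m4 μ a b c b a e c e).const_mul _)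
        ((integrable_m4 μ a b c b c e c e).const_mul _)
        ((integrable_m4 μ c b c b a e a e).const_mul _)
        ((integrable_m4 μ c b c b a e c e).const_mul _)
        ((integrable_m4 μ c b c b c e c e).const_mul _)]
    simp only [integral_const_mul]
  have eq1 := expand1.symm.trans inv1
  have eq2 := expand2.symm.trans inv2
  rw [hz1, hz2, hz3, hz4, hz5, hz6] at eq1 eq2
  have hxx : (∫ U, m4 a b a b a e a e U ∂μ) = ∫ U, m4 c b c b c e c e U ∂μ := by
    linear_combination (-25/32 : ℂ) * eq1 + (25/32 : ℂ) * eq2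
  refine ⟨hxx, ?_⟩
  linear_combination (625/576 : ℂ) * eq1 + (256/576 : ℂ) * hxx

lemma colsum (b e : Fin d) (U : UG d) :
    ∑ a, ent U a b * conj (ent U a e) = if b = e then 1 else 0 := by
  have h := congrFun (congrFun U.2.1 b) e
  rw [Matrix.mul_apply] at h
  calc ∑ a, ent U a b * conj (ent U a e)
      = conj (∑ a, (star (U : Matrix (Fin d) (Fin d) ℂ)) b a
          * (U : Matrix (Fin d) (Fin d) ℂ) a e) := by
        rw [map_sum]
        apply Finset.sum_congr rfl
        intro a _
        rw [Matrix.star_apply, _root_.map_mul]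
        simp [ent, Complex.star_def]
    _ = conj ((1 : Matrix (Fin d) (Fin d) ℂ) b e) := by rw [h]
    _ = if b = e then 1 else 0 := by
        rw [Matrix.one_apply]
        split_ifs <;> simp

include hinv in
lemma key_sum (b e : Fin d) :
    ∑ a : Fin d, ∑ c : Fin d, (∫ U, m4 a b c b a e c e U ∂μ)
      = if b = e then 1 else 0 := by
  have hpt : ∀ U : UG d, ∑ a : Fin d, ∑ c : Fin d, m4 a b c b a e c e U
      = if b = e then (1:ℂ) else 0 := by
    intro U
    have h1 : ∑ a : Fin d, ∑ c : Fin d, m4 a b c b a e c e U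
        = (∑ a, ent U a b * conj (ent U a e)) * (∑ c, ent U c b * conj (ent U c e)) := by
      rw [Finset.sum_mul_sum]
      apply Finset.sum_congr rfl
      intro a _
      apply Finset.sum_congr rfl
      intro c _
      unfold m4
      ring
    rw [h1, colsum]
    split_ifs <;> norm_num
  have hInt : ∀ a : Fin d, Integrable (fun U => ∑ c : Fin d, m4 a b c b a e c e U) μ :=
    fun a => integrable_finset_sum _ (fun c _ => integrable_m4 μ a b c b a e c e)
  calc ∑ a : Fin d, ∑ c : Fin d, (∫ U, m4 a b c b a e c e U ∂μ)
      = ∫ U, ∑ a : Fin d, ∑ c : Fin d, m4 a b c b a e c e U ∂μ := by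
        rw [integral_finset_sum _ (fun a _ => hInt a)]
        apply Finset.sum_congr rfl
        intro a _
        rw [integral_finset_sum _ (fun c _ => integrable_m4 μ a b c b a e c e)]
    _ = ∫ _U : UG d, (if b = e then (1:ℂ) else 0) ∂μ :=
        integral_congr_ae (Filter.Eventually.of_forall hpt)
    _ = if b = e then 1 else 0 := by
        rw [integral_const]
        simp
include hinv in
lemma xval (hd : 2 ≤ d) (b e a : Fin d) :
    ∫ U, m4 a b a b a e a e U ∂μ = if b = e then 2 / ((d:ℂ) * ((d:ℂ)+1)) else 0 := by
  have hd0 : 0 < d := by omega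
  set a₀ : Fin d := ⟨0, hd0⟩ with ha₀
  set x : ℂ := ∫ U, m4 a₀ b a₀ b a₀ e a₀ e U ∂μ with hx
  have hxa : ∀ a' : Fin d, (∫ U, m4 a' b a' b a' e a' e U ∂μ) = x := by
    intro a'
    by_cases h : a' = a₀
    · rw [h]
    · exact (rot_rel μ hinv a' a₀ h b e).1
  have hya : ∀ a' c : Fin d, a' ≠ c → (∫ U, m4 a' b c b a' e c e U ∂μ) = x / 2 := by
    intro a' c h
    rw [(rot_rel μ hinv a' c h b e).2, hxa a']
    ring
  have hkey := key_sum μ hinv b e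
  have hinner : ∀ a' : Fin d, ∑ c : Fin d, (∫ U, m4 a' b c b a' e c e U ∂μ)
      = x + ((d:ℂ) - 1) * (x / 2) := by
    intro a'
    rw [← Finset.add_sum_erase _ _ (Finset.mem_univ a'), hxa a']
    congr 1
    rw [Finset.sum_congr rfl (fun c hc => hya a' c (Ne.symm (Finset.mem_erase.1 hc).1)),
      Finset.sum_const, Finset.card_erase_of_mem (Finset.mem_univ a'),
      Finset.card_univ, Fintype.card_fin, nsmul_eq_mul]
    congr 1
    have : (1:ℕ) ≤ d := by omega
    push_cast [Nat.cast_sub this]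
    ring
  rw [Finset.sum_congr rfl (fun a' _ => hinner a'), Finset.sum_const,
    Finset.card_univ, Fintype.card_fin, nsmul_eq_mul] at hkey
  have hdne : (d:ℂ) ≠ 0 := Nat.cast_ne_zero.2 (by omega)
  have hdne1 : (d:ℂ) + 1 ≠ 0 := by
    intro h
    have : ((d+1 : ℕ) : ℂ) = 0 := by push_cast; linear_combination h
    exact absurd (Nat.cast_eq_zero.1 this) (by omega)
  rw [hxa a]
  split_ifs at hkey ⊢ with hbe
  · field_simp
    linear_combination (2 : ℂ) * hkey
  · have h2 : (d:ℂ) * (1 + ((d:ℂ) - 1) * (1/2)) ≠ 0 := by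
      intro h
      rcases mul_eq_zero.1 h with h' | h'
      · exact hdne h'
      · apply hdne1
        linear_combination 2 * h'
    have := mul_eq_zero.1 (by linear_combination hkey :
      (d:ℂ) * (1 + ((d:ℂ) - 1) * (1/2)) * x = 0)
    rcases this with h' | h'
    · exact absurd h' h2
    · exact h'

noncomputable def Tf (U : UG d) : ℂ := ∑ i, ∑ j, ent U j i * ent U j i

lemma measurable_Tf : Measurable (Tf (d := d)) :=
  Finset.measurable_sum _ (fun i _ => Finset.measurable_sum _
    (fun j _ => (measurable_ent j i).mul (measurable_ent j i)))

lemma norm_Tf_le (U : UG d) : ‖Tf U‖ ≤ (d:ℝ)^2 := by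
  calc ‖Tf U‖ ≤ ∑ i, ‖∑ j, ent U j i * ent U j i‖ := norm_sum_le _ _
    _ ≤ ∑ _i : Fin d, ∑ _j : Fin d, (1:ℝ) := by
        apply Finset.sum_le_sum
        intro i _
        calc ‖∑ j, ent U j i * ent U j i‖ ≤ ∑ j, ‖ent U j i * ent U j i‖ := norm_sum_le _ _
          _ ≤ ∑ _j : Fin d, (1:ℝ) := by
              apply Finset.sum_le_sum
              intro j _
              rw [norm_mul]
              exact mul_le_one₀ (norm_ent_le_one U j i) (norm_nonneg _) (norm_ent_le_one U j i)
    _ = (d:ℝ)^2 := by simp [Finset.sum_const]; ring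

include hinv in
lemma ETT (hd : 2 ≤ d) :
    ∫ U, Tf U * conj (Tf U) ∂μ = 2*(d:ℂ)/((d:ℂ)+1) := by
  have hwnorm : ∀ (j : Fin d) (k : Fin d), ‖(if k = j then Complex.I else 1 : ℂ)‖ = 1 := by
    intro j k; split_ifs <;> simp
  have hM : ∀ i j k l : Fin d, (∫ U, m4 j i j i l k l k U ∂μ)
      = if l = j then (if i = k then 2/((d:ℂ)*((d:ℂ)+1)) else 0) else 0 := by
    intro i j k l
    by_cases hlj : l = j
    · subst hlj
      rw [if_pos rfl]
      exact xval μ hinv hd i k l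
    · rw [if_neg hlj]
      exact phase_vanish μ hinv _ _ _ _ _ _ _ _
        (fun k' => if k' = j then Complex.I else 1) (hwnorm j)
        (by norm_num [hlj, Complex.ext_iff])
  have hpt : ∀ U : UG d, Tf U * conj (Tf U)
      = ∑ i : Fin d, ∑ k : Fin d, ∑ j : Fin d, ∑ l : Fin d, m4 j i j i l k l k U := by
    intro U
    unfold Tf
    rw [map_sum, Finset.sum_mul_sum]
    apply Finset.sum_congr rfl
    intro i _
    apply Finset.sum_congr rfl
    intro k _
    rw [map_sum, Finset.sum_mul_sum]
    apply Finset.sum_congr rfl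
    intro j _
    apply Finset.sum_congr rfl
    intro l _
    unfold m4
    rw [_root_.map_mul]
    ring
  have I1 : ∀ i k j : Fin d, Integrable (fun U => ∑ l : Fin d, m4 j i j i l k l k U) μ :=
    fun i k j => integrable_finset_sum _ (fun l _ => integrable_m4 μ j i j i l k l k)
  have I2 : ∀ i k : Fin d,
      Integrable (fun U => ∑ j : Fin d, ∑ l : Fin d, m4 j i j i l k l k U) μ :=
    fun i k => integrable_finset_sum _ (fun j _ => I1 i k j)
  have I3 : ∀ i : Fin d,
      Integrable (fun U => ∑ k : Fin d, ∑ j : Fin d, ∑ l : Fin d, m4 j i j i l k l k U) μ :=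
    fun i => integrable_finset_sum _ (fun k _ => I2 i k)
  have step : ∫ U, Tf U * conj (Tf U) ∂μ
      = ∑ i : Fin d, ∑ k : Fin d, ∑ j : Fin d, ∑ l : Fin d,
          (∫ U, m4 j i j i l k l k U ∂μ) := by
    rw [integral_congr_ae (Filter.Eventually.of_forall hpt),
      integral_finset_sum _ (fun i _ => I3 i)]
    apply Finset.sum_congr rfl
    intro i _
    rw [integral_finset_sum _ (fun k _ => I2 i k)]
    apply Finset.sum_congr rfl
    intro k _
    rw [integral_finset_sum _ (fun j _ => I1 i k j)]
    apply Finset.sum_congr rfl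
    intro j _
    rw [integral_finset_sum _ (fun l _ => integrable_m4 μ j i j i l k l k)]
  rw [step]
  have hv : ∀ i k : Fin d, ∑ j : Fin d, ∑ l : Fin d,
      (∫ U, m4 j i j i l k l k U ∂μ)
      = (d:ℂ) * (if i = k then 2/((d:ℂ)*((d:ℂ)+1)) else 0) := by
    intro i k
    rw [Finset.sum_congr rfl (fun j _ => by
      rw [Finset.sum_congr rfl (fun l _ => hM i j k l),
        Finset.sum_ite_eq' Finset.univ j
          (fun _ => if i = k then 2/((d:ℂ)*((d:ℂ)+1)) else 0),
        if_pos (Finset.mem_univ j)])]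
    rw [Finset.sum_const, Finset.card_univ, Fintype.card_fin, nsmul_eq_mul]
  rw [Finset.sum_congr rfl (fun i _ => by
    rw [Finset.sum_congr rfl (fun k _ => hv i k), ← Finset.mul_sum,
      Finset.sum_ite_eq Finset.univ i (fun _ => 2/((d:ℂ)*((d:ℂ)+1))),
      if_pos (Finset.mem_univ i)])]
  rw [Finset.sum_const, Finset.card_univ, Fintype.card_fin, nsmul_eq_mul]
  have hdne : (d:ℂ) ≠ 0 := Nat.cast_ne_zero.2 (by omega)
  have hdne1 : (d:ℂ) + 1 ≠ 0 := by
    intro h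
    have : ((d+1 : ℕ) : ℂ) = 0 := by push_cast; linear_combination h
    exact absurd (Nat.cast_eq_zero.1 this) (by omega)
  field_simp

include hinv in
lemma real_moment (hd : 2 ≤ d) :
    ∫ U, ‖Tf U‖^2 ∂μ = 2*(d:ℝ)/((d:ℝ)+1) := by
  have h1 : ∀ U : UG d, Tf U * conj (Tf U) = ((‖Tf U‖^2 : ℝ) : ℂ) := by
    intro U
    rw [Complex.mul_conj]
    simp [Complex.normSq_eq_norm_sq]
  have h2 : ((∫ U, ‖Tf U‖^2 ∂μ : ℝ) : ℂ) = ((2*(d:ℝ)/((d:ℝ)+1) : ℝ) : ℂ) := by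
    calc ((∫ U, ‖Tf U‖^2 ∂μ : ℝ) : ℂ)
        = ∫ U, ((‖Tf U‖^2 : ℝ) : ℂ) ∂μ := integral_ofReal.symm
      _ = ∫ U, Tf U * conj (Tf U) ∂μ :=
          integral_congr_ae (Filter.Eventually.of_forall (fun U => (h1 U).symm))
      _ = 2*(d:ℂ)/((d:ℂ)+1) := ETT μ hinv hd
      _ = ((2*(d:ℝ)/((d:ℝ)+1) : ℝ) : ℂ) := by push_cast; ring
  exact_mod_cast h2

lemma integrable_normsq : Integrable (fun U : UG d => ‖Tf U‖^2) μ := by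
  apply (integrable_const ((d:ℝ)^2 * (d:ℝ)^2)).mono'
    ((measurable_Tf.norm.pow_const 2).aestronglyMeasurable)
  apply Filter.Eventually.of_forall
  intro U
  rw [Real.norm_eq_abs, abs_of_nonneg (by positivity), pow_two]
  exact mul_le_mul (norm_Tf_le U) (norm_Tf_le U) (norm_nonneg _) (by positivity)

end AvgImag

open AvgImag in
/-- The average imaginarity `I(U) = 1 - d^{-2}|tr(Uᵀ U)|²` over the Haar
(i.e. left-invariant probability) measure on the unitary group `U(ℂ^d)`, `d ≥ 2`,
equals `1 - 2/(d(d+1))`. -/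
theorem average_imaginarity_haar_unitaries (d : ℕ) (hd : 2 ≤ d)
    (μ : Measure (Matrix.unitaryGroup (Fin d) ℂ)) [IsProbabilityMeasure μ]
    (hinv : ∀ V : Matrix.unitaryGroup (Fin d) ℂ,
      Measure.map (fun U => V * U) μ = μ) :
    ∫ U : Matrix.unitaryGroup (Fin d) ℂ,
        (1 - ((d : ℝ) ^ 2)⁻¹ *
          ‖((U : Matrix (Fin d) (Fin d) ℂ)ᵀ * (U : Matrix (Fin d) (Fin d) ℂ)).trace‖ ^ 2) ∂μ
      = 1 - 2 / ((d : ℝ) * ((d : ℝ) + 1)) := by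
  have hd0 : (d:ℝ) ≠ 0 := Nat.cast_ne_zero.2 (by omega)
  have hd1 : (d:ℝ) + 1 ≠ 0 := by positivity
  have htr : ∀ U : Matrix.unitaryGroup (Fin d) ℂ,
      ((U : Matrix (Fin d) (Fin d) ℂ)ᵀ * (U : Matrix (Fin d) (Fin d) ℂ)).trace = Tf U := by
    intro U
    rw [Matrix.trace]
    apply Finset.sum_congr rfl
    intro i _
    rw [Matrix.diag_apply, Matrix.mul_apply]
    apply Finset.sum_congr rfl
    intro j _
    rw [Matrix.transpose_apply]
    rfl
  calc ∫ U : Matrix.unitaryGroup (Fin d) ℂ,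
        (1 - ((d : ℝ) ^ 2)⁻¹ *
          ‖((U : Matrix (Fin d) (Fin d) ℂ)ᵀ * (U : Matrix (Fin d) (Fin d) ℂ)).trace‖ ^ 2) ∂μ
      = ∫ U : Matrix.unitaryGroup (Fin d) ℂ, (1 - ((d : ℝ) ^ 2)⁻¹ * ‖Tf U‖ ^ 2) ∂μ := by
        apply integral_congr_ae
        apply Filter.Eventually.of_forall
        intro U
        simp only [htr]
    _ = (∫ _U : Matrix.unitaryGroup (Fin d) ℂ, (1:ℝ) ∂μ)
        - ∫ U : Matrix.unitaryGroup (Fin d) ℂ, ((d : ℝ) ^ 2)⁻¹ * ‖Tf U‖ ^ 2 ∂μ := by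
        exact integral_sub (integrable_const 1) ((integrable_normsq μ).const_mul _)
    _ = 1 - ((d : ℝ) ^ 2)⁻¹ * (2*(d:ℝ)/((d:ℝ)+1)) := by
        rw [integral_const, integral_const_mul, real_moment μ hinv hd]
        simp
    _ = 1 - 2 / ((d : ℝ) * ((d : ℝ) + 1)) := by
        field_simp
end

section
/- For Haar-random pure states, the expected value of Σ_k |c_k|⁴ (the purity of the dephased state) equals 2/(d+1): ∫ Σ_{k=0}^{d-1} |⟨k|U|0⟩|⁴ dη(U) = 2/(d+1). Equivalently, E[C₂(ψ)] = 1 - 2/(d+1) for the Hilbert–Schmidt coherence C₂(ψ) = 1 - Σ_k |c_k|⁴. -/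
open Matrix MeasureTheory

section Aux

theorem sum_two' {d : ℕ} (e0 e1 : Fin d) (h : e0 ≠ e1) (f : Fin d → ℂ)
    (hf : ∀ k, k ≠ e0 → k ≠ e1 → f k = 0) : ∑ k, f k = f e0 + f e1 := by
  rw [← Finset.sum_pair h]
  refine (Finset.sum_subset (Finset.subset_univ _) ?_).symm
  intro x _ hx
  simp only [Finset.mem_insert, Finset.mem_singleton, not_or] at hx
  exact hf x hx.1 hx.2

noncomputable def Wmat {d : ℕ} (e0 e1 : Fin d) (ω : ℂ) : Matrix (Fin d) (Fin d) ℂ :=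
  fun i j =>
    if i = e0 then (if j = e0 then ((Real.sqrt 2)⁻¹ : ℝ) else if j = e1 then ω * ((Real.sqrt 2)⁻¹ : ℝ) else 0)
    else if i = e1 then (if j = e0 then (starRingEnd ℂ) ω * ((Real.sqrt 2)⁻¹ : ℝ) else if j = e1 then -((Real.sqrt 2)⁻¹ : ℝ) else 0)
    else (if j = i then 1 else 0)

theorem s_mul_s : (((Real.sqrt 2) : ℝ) : ℂ)⁻¹ * (((Real.sqrt 2) : ℝ) : ℂ)⁻¹ = (1/2 : ℂ) := by
  rw [← mul_inv]
  norm_cast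
  rw [Real.mul_self_sqrt (by norm_num : (0:ℝ) ≤ 2)]
  norm_num

theorem Wmem {d : ℕ} (e0 e1 : Fin d) (h : e0 ≠ e1) (ω : ℂ) (hω : ‖ω‖ = 1) :
    Wmat e0 e1 ω ∈ Matrix.unitaryGroup (Fin d) ℂ := by
  have hωω : ω * (starRingEnd ℂ) ω = 1 := by
    rw [Complex.mul_conj]
    norm_cast
    rw [Complex.normSq_eq_norm_sq, hω]; norm_num
  rw [Matrix.mem_unitaryGroup_iff]
  ext i j
  rw [Matrix.mul_apply]
  simp only [Matrix.star_apply]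
  by_cases hi0 : i = e0
  · rw [sum_two' e0 e1 h _ (by intro k hk0 hk1; simp [Wmat, hi0, hk0, hk1])]
    by_cases hj0 : j = e0
    · simp [Wmat, Matrix.one_apply, hi0, hj0, h, Ne.symm h, Complex.conj_ofReal,
        Complex.ofReal_inv]
      linear_combination 2 * s_mul_s + ((((Real.sqrt 2) : ℝ) : ℂ)⁻¹ * (((Real.sqrt 2) : ℝ) : ℂ)⁻¹) * hωω
    · by_cases hj1 : j = e1
      · simp [Wmat, Matrix.one_apply, hi0, hj1, h, Ne.symm h, Complex.conj_ofReal,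
          Complex.ofReal_inv, fun hh => hj0 (hh.symm.trans hi0) ∘ Eq.symm]
        ring
      · have hij : ¬ i = j := fun hh => hj0 (hh.symm.trans hi0)
        simp [Wmat, Matrix.one_apply, hi0, hj0, hj1, Ne.symm hj0, Ne.symm hj1, h, Ne.symm h, hij,
          Complex.conj_ofReal, Complex.ofReal_inv]
  · by_cases hi1 : i = e1
    · rw [sum_two' e0 e1 h _ (by intro k hk0 hk1; simp [Wmat, hi0, hi1, hk0, hk1, Ne.symm h])]
      by_cases hj0 : j = e0
      · simp [Wmat, Matrix.one_apply, hi1, hj0, h, Ne.symm h, hi0, Complex.conj_ofReal,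
          Complex.ofReal_inv]
        ring
      · by_cases hj1 : j = e1
        · simp [Wmat, Matrix.one_apply, hi1, hj1, h, Ne.symm h, hi0, Complex.conj_ofReal,
            Complex.ofReal_inv]
          linear_combination 2 * s_mul_s + ((((Real.sqrt 2) : ℝ) : ℂ)⁻¹ * (((Real.sqrt 2) : ℝ) : ℂ)⁻¹) * hωω
        · have hij : ¬ i = j := fun hh => hj1 (hh.symm.trans hi1)
          simp [Wmat, Matrix.one_apply, hi1, hj0, hj1, Ne.symm hj0, Ne.symm hj1, h, Ne.symm h,
            hi0, hij, Complex.conj_ofReal, Complex.ofReal_inv]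
    · rw [Finset.sum_eq_single i (by intro k _ hk; simp [Wmat, hi0, hi1, hk])
        (by intro hi; exact absurd (Finset.mem_univ i) hi)]
      by_cases hj0 : j = e0
      · have hij : ¬ i = j := fun hh => hi0 (hh.trans hj0)
        simp [Wmat, Matrix.one_apply, hi0, hi1, hj0, h, Ne.symm h, Ne.symm hi0, Ne.symm hi1, hij,
          Complex.conj_ofReal, Complex.ofReal_inv]
      · by_cases hj1 : j = e1
        · have hij : ¬ i = j := fun hh => hi1 (hh.trans hj1)
          simp [Wmat, Matrix.one_apply, hi0, hi1, hj0, hj1, h, Ne.symm h, Ne.symm hi0,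
            Ne.symm hi1, hij, Complex.conj_ofReal, Complex.ofReal_inv]
        · simp only [Wmat, Matrix.one_apply, if_neg hi0, if_neg hi1, if_neg hj0, if_neg hj1,
            if_pos rfl]
          by_cases hij : i = j
          · simp [hij]
          · have hji : ¬ j = i := fun hh => hij hh.symm
            simp [hij, hji]

theorem permMem (d : ℕ) (σ : Equiv.Perm (Fin d)) :
    σ.permMatrix ℂ ∈ Matrix.unitaryGroup (Fin d) ℂ := by
  rw [Matrix.mem_unitaryGroup_iff]
  have hstar : star (σ.permMatrix ℂ) = (σ⁻¹).permMatrix ℂ := by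
    ext i j
    simp only [star_apply, Matrix.conjTranspose_apply]
    simp only [Equiv.Perm.permMatrix, PEquiv.toMatrix_apply, Equiv.toPEquiv_apply,
      Option.mem_some_iff]
    by_cases h : σ j = i
    · have h2 : σ⁻¹ i = j := by simp [← h]
      simp [h, h2]
    · have h2 : σ⁻¹ i ≠ j := fun hh => h (by simp [← hh])
      simpa [h] using h2
  rw [hstar]
  rw [← PEquiv.toMatrix_trans, ← Equiv.toPEquiv_trans]
  rw [show σ.trans (σ⁻¹ : Equiv.Perm (Fin d)) = Equiv.refl (Fin d) from by ext x; simp]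
  simp [Equiv.toPEquiv_refl]

theorem perm_pair (d : ℕ) (e0 e1 k l : Fin d) (h01 : e0 ≠ e1) (hkl : k ≠ l) :
    ∃ σ : Equiv.Perm (Fin d), σ e0 = k ∧ σ e1 = l := by
  classical
  refine ⟨(Equiv.swap e0 k) * (Equiv.swap e1 ((Equiv.swap e0 k) l)), ?_, ?_⟩
  · have h1 : (Equiv.swap e0 k) l ≠ e0 := by
      intro hh
      apply hkl
      have := congrArg (Equiv.swap e0 k) hh
      simpa using this.symm
    simp [Equiv.Perm.mul_apply, Equiv.swap_apply_of_ne_of_ne h01 (Ne.symm h1)]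
  · simp [Equiv.Perm.mul_apply]

theorem entryMeas (d : ℕ) (i j : Fin d) :
    Measurable (fun U : Matrix.unitaryGroup (Fin d) ℂ => (U : Matrix (Fin d) (Fin d) ℂ) i j) := by
  exact (measurable_pi_apply j).comp ((measurable_pi_apply i).comp measurable_subtype_coe)

theorem mulMeas (d : ℕ) (V : Matrix.unitaryGroup (Fin d) ℂ) :
    Measurable (fun U : Matrix.unitaryGroup (Fin d) ℂ => V * U) := by
  apply Measurable.subtype_mk
  refine measurable_pi_iff.mpr (fun i => ?_)
  refine measurable_pi_iff.mpr (fun j => ?_)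
  have : (fun U : Matrix.unitaryGroup (Fin d) ℂ => ((V * U : Matrix.unitaryGroup (Fin d) ℂ) : Matrix (Fin d) (Fin d) ℂ) i j)
      = fun U : Matrix.unitaryGroup (Fin d) ℂ => ∑ k, (V : Matrix (Fin d) (Fin d) ℂ) i k * (U : Matrix (Fin d) (Fin d) ℂ) k j := by
    ext U; simp [Matrix.mul_apply]
  exact this ▸ Finset.measurable_sum _ (fun k _ => (measurable_const.mul (entryMeas d k j)))

theorem int_inv (d : ℕ) (μ : Measure (Matrix.unitaryGroup (Fin d) ℂ))
    (hinv : ∀ V : Matrix.unitaryGroup (Fin d) ℂ, Measure.map (fun U => V * U) μ = μ)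
    (V : Matrix.unitaryGroup (Fin d) ℂ) (g : Matrix.unitaryGroup (Fin d) ℂ → ℝ)
    (hg : Measurable g) :
    ∫ U, g (V * U) ∂μ = ∫ U, g U ∂μ := by
  conv_rhs => rw [← hinv V]
  rw [integral_map (mulMeas d V).aemeasurable hg.aestronglyMeasurable]

theorem colnorm (d : ℕ) (U : Matrix.unitaryGroup (Fin d) ℂ) (j : Fin d) :
    ∑ k, ‖(U : Matrix (Fin d) (Fin d) ℂ) k j‖ ^ 2 = 1 := by
  have h := (Matrix.mem_unitaryGroup_iff'.mp U.2)
  have h2 := congrArg (fun M => M j j) h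
  simp only [Matrix.mul_apply, Matrix.one_apply_eq, Matrix.star_apply] at h2
  have e : ∀ k, (star ((U : Matrix (Fin d) (Fin d) ℂ) k j)) * (U : Matrix (Fin d) (Fin d) ℂ) k j
      = ((‖(U : Matrix (Fin d) (Fin d) ℂ) k j‖ ^ 2 : ℝ) : ℂ) := by
    intro k
    rw [Complex.star_def, Complex.conj_mul']
    norm_cast
  rw [Finset.sum_congr rfl (fun k _ => e k)] at h2
  exact_mod_cast h2

theorem entry_le_one (d : ℕ) (U : Matrix.unitaryGroup (Fin d) ℂ) (k j : Fin d) :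
    ‖(U : Matrix (Fin d) (Fin d) ℂ) k j‖ ≤ 1 := by
  have h1 : ‖(U : Matrix (Fin d) (Fin d) ℂ) k j‖ ^ 2 ≤ 1 := by
    rw [← colnorm d U j]
    exact Finset.single_le_sum (f := fun k => ‖(U : Matrix (Fin d) (Fin d) ℂ) k j‖ ^ 2)
      (fun i _ => by positivity) (Finset.mem_univ k)
  nlinarith [norm_nonneg ((U : Matrix (Fin d) (Fin d) ℂ) k j)]

theorem normpow2 (z : ℂ) : ‖z‖ ^ 2 = z.re * z.re + z.im * z.im := by
  rw [Complex.sq_norm, Complex.normSq_apply]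

theorem normpow4 (z : ℂ) : ‖z‖ ^ 4 = (z.re * z.re + z.im * z.im) ^ 2 := by
  rw [show (4 : ℕ) = 2 * 2 from rfl, pow_mul, normpow2]

theorem fourphase (x y : ℂ) :
    ‖x + 1 * y‖ ^ 4 + ‖x + Complex.I * y‖ ^ 4 + ‖x + (-1) * y‖ ^ 4 + ‖x + (-Complex.I) * y‖ ^ 4
      = 4 * (‖x‖ ^ 2 + ‖y‖ ^ 2) ^ 2 + 8 * (‖x‖ ^ 2 * ‖y‖ ^ 2) := by
  simp only [normpow4, normpow2, Complex.add_re, Complex.add_im, Complex.sub_re, Complex.sub_im,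
    Complex.mul_re, Complex.mul_im, Complex.I_re, Complex.I_im, Complex.neg_re, Complex.neg_im,
    Complex.one_re, Complex.one_im]
  ring

theorem bdd_integrable (d : ℕ) (μ : Measure (Matrix.unitaryGroup (Fin d) ℂ))
    [IsProbabilityMeasure μ] (g : Matrix.unitaryGroup (Fin d) ℂ → ℝ) (C : ℝ)
    (hg : Measurable g) (hb : ∀ U, |g U| ≤ C) : Integrable g μ :=
  (integrable_const C).mono' hg.aestronglyMeasurable
    (ae_of_all _ (fun U => by simpa [Real.norm_eq_abs] using hb U))

end Aux

/-- For Haar-random pure states `ψ_U = U|0⟩`, the expected purity of the dephased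
state satisfies `∫ Σ_k |⟨k|U|0⟩|⁴ dη(U) = 2/(d+1)`; equivalently the expected
Hilbert–Schmidt coherence `C₂ = 1 - Σ_k |c_k|⁴` equals `1 - 2/(d+1)`. -/
theorem average_coherence_haar_states (d : ℕ) (hd : 2 ≤ d)
    (μ : Measure (Matrix.unitaryGroup (Fin d) ℂ)) [IsProbabilityMeasure μ]
    (hinv : ∀ V : Matrix.unitaryGroup (Fin d) ℂ,
      Measure.map (fun U => V * U) μ = μ) :
    (∫ U : Matrix.unitaryGroup (Fin d) ℂ,
        (∑ k, ‖(U : Matrix (Fin d) (Fin d) ℂ) k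
          (⟨0, by omega⟩ : Fin d)‖ ^ 4) ∂μ = 2 / ((d : ℝ) + 1))
    ∧ (∫ U : Matrix.unitaryGroup (Fin d) ℂ,
        (1 - ∑ k, ‖(U : Matrix (Fin d) (Fin d) ℂ) k
          (⟨0, by omega⟩ : Fin d)‖ ^ 4) ∂μ = 1 - 2 / ((d : ℝ) + 1)) := by
  classical
  set e0 : Fin d := ⟨0, by omega⟩ with he0
  set e1 : Fin d := ⟨1, by omega⟩ with he1
  have h01 : e0 ≠ e1 := by simp [he0, he1, Fin.ext_iff]
  -- component functions
  set q : Matrix.unitaryGroup (Fin d) ℂ → Fin d → ℝ := fun U k => ‖(U : Matrix (Fin d) (Fin d) ℂ) k e0‖ ^ 2 with hq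
  have qmeas : ∀ k, Measurable (fun U : Matrix.unitaryGroup (Fin d) ℂ => q U k) :=
    fun k => ((entryMeas d k e0).norm.pow_const 2)
  have qnn : ∀ (U : Matrix.unitaryGroup (Fin d) ℂ) k, 0 ≤ q U k := fun U k => by positivity
  have qle : ∀ (U : Matrix.unitaryGroup (Fin d) ℂ) k, q U k ≤ 1 := fun U k => by
    have := entry_le_one d U k e0
    have h0 := norm_nonneg ((U : Matrix (Fin d) (Fin d) ℂ) k e0)
    simp only [hq]; nlinarith
  have qqmeas : ∀ k l, Measurable (fun U : Matrix.unitaryGroup (Fin d) ℂ => q U k * q U l) :=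
    fun k l => (qmeas k).mul (qmeas l)
  have qqint : ∀ k l, Integrable (fun U : Matrix.unitaryGroup (Fin d) ℂ => q U k * q U l) μ := by
    intro k l
    refine bdd_integrable d μ _ 1 (qqmeas k l) (fun U => ?_)
    rw [abs_of_nonneg (mul_nonneg (qnn U k) (qnn U l))]
    calc q U k * q U l ≤ 1 * 1 := mul_le_mul (qle U k) (qle U l) (qnn U l) (by norm_num)
    _ = 1 := by norm_num
  set a : ℝ := ∫ U, q U e0 * q U e0 ∂μ with ha
  set b : ℝ := ∫ U, q U e0 * q U e1 ∂μ with hb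
  -- permutation invariance
  have permInt : ∀ (σ : Equiv.Perm (Fin d)) (k l : Fin d),
      ∫ U, q U (σ k) * q U (σ l) ∂μ = ∫ U, q U k * q U l ∂μ := by
    intro σ k l
    set V : Matrix.unitaryGroup (Fin d) ℂ := ⟨σ.permMatrix ℂ, permMem d σ⟩ with hV
    have hact : ∀ (U : Matrix.unitaryGroup (Fin d) ℂ) (m : Fin d), q (V * U) m = q U (σ m) := by
      intro U m
      have hco : ((V * U : Matrix.unitaryGroup (Fin d) ℂ) : Matrix (Fin d) (Fin d) ℂ)
          = σ.permMatrix ℂ * (U : Matrix (Fin d) (Fin d) ℂ) := rfl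
      simp only [hq, hco, PEquiv.toMatrix_toPEquiv_mul, Matrix.submatrix_apply, id]
    have := int_inv d μ hinv V (fun U => q U k * q U l) (qqmeas k l)
    rw [← this]
    exact integral_congr_ae (ae_of_all _ (fun U => by simp only [hact]))
  have m4eq : ∀ k, ∫ U, q U k * q U k ∂μ = a := by
    intro k
    have := permInt (Equiv.swap e0 k) e0 e0
    simpa using this
  have m2eq : ∀ k l, k ≠ l → ∫ U, q U k * q U l ∂μ = b := by
    intro k l hkl
    obtain ⟨σ, hσ0, hσ1⟩ := perm_pair d e0 e1 k l h01 hkl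
    have := permInt σ e0 e1
    rw [hσ0, hσ1] at this
    rw [this]
  -- rotation invariance : fourth moment of x + ω y
  have rotInt : ∀ ω : ℂ, ‖ω‖ = 1 →
      ∫ U, ‖(U : Matrix (Fin d) (Fin d) ℂ) e0 e0 + ω * (U : Matrix (Fin d) (Fin d) ℂ) e1 e0‖ ^ 4 ∂μ
        = 4 * a := by
    intro ω hω
    set V : Matrix.unitaryGroup (Fin d) ℂ := ⟨Wmat e0 e1 ω, Wmem e0 e1 h01 ω hω⟩ with hV
    have hg : Measurable (fun U : Matrix.unitaryGroup (Fin d) ℂ => q U e0 * q U e0) := qqmeas e0 e0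
    have h1 := int_inv d μ hinv V (fun U => q U e0 * q U e0) hg
    have hact : ∀ U : Matrix.unitaryGroup (Fin d) ℂ, q (V * U) e0
        = (1/2 : ℝ) * ‖(U : Matrix (Fin d) (Fin d) ℂ) e0 e0 + ω * (U : Matrix (Fin d) (Fin d) ℂ) e1 e0‖ ^ 2 := by
      intro U
      have hco : ((V * U : Matrix.unitaryGroup (Fin d) ℂ) : Matrix (Fin d) (Fin d) ℂ)
          = Wmat e0 e1 ω * (U : Matrix (Fin d) (Fin d) ℂ) := rfl
      have hmul : ((V * U : Matrix.unitaryGroup (Fin d) ℂ) : Matrix (Fin d) (Fin d) ℂ) e0 e0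
          = (((Real.sqrt 2) : ℝ) : ℂ)⁻¹ *
            ((U : Matrix (Fin d) (Fin d) ℂ) e0 e0 + ω * (U : Matrix (Fin d) (Fin d) ℂ) e1 e0) := by
        rw [hco, Matrix.mul_apply,
          sum_two' e0 e1 h01 _ (by intro k hk0 hk1; simp [Wmat, hk0, hk1])]
        simp [Wmat, h01, Ne.symm h01, Complex.ofReal_inv]
        ring
      simp only [hq, hmul, norm_mul, norm_inv]
      rw [Complex.norm_real, Real.norm_eq_abs, abs_of_nonneg (Real.sqrt_nonneg 2), mul_pow,
        inv_pow, Real.sq_sqrt (by norm_num : (0:ℝ) ≤ 2)]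
      norm_num
    rw [← h1] at ha
    have : ∀ U : Matrix.unitaryGroup (Fin d) ℂ, q (V * U) e0 * q (V * U) e0
        = (1/4 : ℝ) * ‖(U : Matrix (Fin d) (Fin d) ℂ) e0 e0 + ω * (U : Matrix (Fin d) (Fin d) ℂ) e1 e0‖ ^ 4 := by
      intro U
      rw [hact U]
      rw [show (4:ℕ) = 2*2 from rfl, pow_mul]
      ring
    rw [integral_congr_ae (ae_of_all _ this), integral_const_mul] at ha
    rw [ha]; ring
  -- integrability of rotated fourth moments
  have rotMeas : ∀ ω : ℂ, Measurable (fun U : Matrix.unitaryGroup (Fin d) ℂ =>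
      ‖(U : Matrix (Fin d) (Fin d) ℂ) e0 e0 + ω * (U : Matrix (Fin d) (Fin d) ℂ) e1 e0‖ ^ 4) := by
    intro ω
    exact (((entryMeas d e0 e0).add ((entryMeas d e1 e0).const_mul ω)).norm.pow_const 4)
  have rotInteg : ∀ ω : ℂ, ‖ω‖ = 1 → Integrable (fun U : Matrix.unitaryGroup (Fin d) ℂ =>
      ‖(U : Matrix (Fin d) (Fin d) ℂ) e0 e0 + ω * (U : Matrix (Fin d) (Fin d) ℂ) e1 e0‖ ^ 4) μ := by
    intro ω hω
    refine bdd_integrable d μ _ 16 (rotMeas ω) (fun U => ?_)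
    have hx := entry_le_one d U e0 e0
    have hy := entry_le_one d U e1 e0
    have hnorm : ‖(U : Matrix (Fin d) (Fin d) ℂ) e0 e0 + ω * (U : Matrix (Fin d) (Fin d) ℂ) e1 e0‖ ≤ 2 := by
      calc ‖(U : Matrix (Fin d) (Fin d) ℂ) e0 e0 + ω * (U : Matrix (Fin d) (Fin d) ℂ) e1 e0‖
          ≤ ‖(U : Matrix (Fin d) (Fin d) ℂ) e0 e0‖ + ‖ω * (U : Matrix (Fin d) (Fin d) ℂ) e1 e0‖ :=
            norm_add_le _ _
        _ ≤ 1 + 1 := by rw [norm_mul, hω, one_mul]; exact add_le_add hx hy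
        _ = 2 := by norm_num
    have h0 := norm_nonneg ((U : Matrix (Fin d) (Fin d) ℂ) e0 e0 + ω * (U : Matrix (Fin d) (Fin d) ℂ) e1 e0)
    rw [abs_of_nonneg (by positivity)]
    calc ‖(U : Matrix (Fin d) (Fin d) ℂ) e0 e0 + ω * (U : Matrix (Fin d) (Fin d) ℂ) e1 e0‖ ^ 4
        ≤ 2 ^ 4 := pow_le_pow_left₀ h0 hnorm 4
      _ = 16 := by norm_num
  -- the four-phase relation gives a = 2 b
  have hab : a = 2 * b := by
    have hω1 : ‖(1 : ℂ)‖ = 1 := by simp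
    have hωI : ‖Complex.I‖ = 1 := by simp
    have hωn1 : ‖(-1 : ℂ)‖ = 1 := by simp
    have hωnI : ‖(-Complex.I : ℂ)‖ = 1 := by simp
    have hLHS : ∫ U, (‖(U : Matrix (Fin d) (Fin d) ℂ) e0 e0 + 1 * (U : Matrix (Fin d) (Fin d) ℂ) e1 e0‖ ^ 4
        + ‖(U : Matrix (Fin d) (Fin d) ℂ) e0 e0 + Complex.I * (U : Matrix (Fin d) (Fin d) ℂ) e1 e0‖ ^ 4
        + ‖(U : Matrix (Fin d) (Fin d) ℂ) e0 e0 + (-1) * (U : Matrix (Fin d) (Fin d) ℂ) e1 e0‖ ^ 4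
        + ‖(U : Matrix (Fin d) (Fin d) ℂ) e0 e0 + (-Complex.I) * (U : Matrix (Fin d) (Fin d) ℂ) e1 e0‖ ^ 4) ∂μ
        = 16 * a := by
      have I1 := rotInteg 1 hω1
      have I2 := rotInteg Complex.I hωI
      have I3 := rotInteg (-1) hωn1
      have I4 := rotInteg (-Complex.I) hωnI
      have I12 : Integrable (fun U : Matrix.unitaryGroup (Fin d) ℂ =>
          ‖(U : Matrix (Fin d) (Fin d) ℂ) e0 e0 + 1 * (U : Matrix (Fin d) (Fin d) ℂ) e1 e0‖ ^ 4
          + ‖(U : Matrix (Fin d) (Fin d) ℂ) e0 e0 + Complex.I * (U : Matrix (Fin d) (Fin d) ℂ) e1 e0‖ ^ 4) μ := I1.add I2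
      have I123 : Integrable (fun U : Matrix.unitaryGroup (Fin d) ℂ =>
          ‖(U : Matrix (Fin d) (Fin d) ℂ) e0 e0 + 1 * (U : Matrix (Fin d) (Fin d) ℂ) e1 e0‖ ^ 4
          + ‖(U : Matrix (Fin d) (Fin d) ℂ) e0 e0 + Complex.I * (U : Matrix (Fin d) (Fin d) ℂ) e1 e0‖ ^ 4
          + ‖(U : Matrix (Fin d) (Fin d) ℂ) e0 e0 + (-1) * (U : Matrix (Fin d) (Fin d) ℂ) e1 e0‖ ^ 4) μ := I12.add I3
      rw [integral_add I123 I4, integral_add I12 I3, integral_add I1 I2,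
        rotInt 1 hω1, rotInt _ hωI, rotInt _ hωn1, rotInt _ hωnI]
      ring
    have hptwise : ∀ U : Matrix.unitaryGroup (Fin d) ℂ, (‖(U : Matrix (Fin d) (Fin d) ℂ) e0 e0 + 1 * (U : Matrix (Fin d) (Fin d) ℂ) e1 e0‖ ^ 4
        + ‖(U : Matrix (Fin d) (Fin d) ℂ) e0 e0 + Complex.I * (U : Matrix (Fin d) (Fin d) ℂ) e1 e0‖ ^ 4
        + ‖(U : Matrix (Fin d) (Fin d) ℂ) e0 e0 + (-1) * (U : Matrix (Fin d) (Fin d) ℂ) e1 e0‖ ^ 4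
        + ‖(U : Matrix (Fin d) (Fin d) ℂ) e0 e0 + (-Complex.I) * (U : Matrix (Fin d) (Fin d) ℂ) e1 e0‖ ^ 4)
        = 4 * (q U e0 * q U e0) + 8 * (q U e0 * q U e1) + 4 * (q U e1 * q U e1)
          + 8 * (q U e0 * q U e1) := by
      intro U
      rw [fourphase]
      simp only [hq]
      ring
    rw [integral_congr_ae (ae_of_all _ hptwise)] at hLHS
    have J1 : Integrable (fun U : Matrix.unitaryGroup (Fin d) ℂ => 4 * (q U e0 * q U e0)) μ :=
      (qqint e0 e0).const_mul 4
    have J2 : Integrable (fun U : Matrix.unitaryGroup (Fin d) ℂ => 8 * (q U e0 * q U e1)) μ :=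
      (qqint e0 e1).const_mul 8
    have J3 : Integrable (fun U : Matrix.unitaryGroup (Fin d) ℂ => 4 * (q U e1 * q U e1)) μ :=
      (qqint e1 e1).const_mul 4
    have J12 : Integrable (fun U : Matrix.unitaryGroup (Fin d) ℂ =>
        4 * (q U e0 * q U e0) + 8 * (q U e0 * q U e1)) μ := J1.add J2
    have J123 : Integrable (fun U : Matrix.unitaryGroup (Fin d) ℂ =>
        4 * (q U e0 * q U e0) + 8 * (q U e0 * q U e1) + 4 * (q U e1 * q U e1)) μ := J12.add J3
    rw [integral_add J123 J2, integral_add J12 J3, integral_add J1 J2,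
        integral_const_mul] at hLHS
    simp only [integral_const_mul] at hLHS
    rw [m4eq e1] at hLHS
    rw [← ha, ← hb] at hLHS
    linarith
  -- normalization : total second moments sum to 1
  have hnorm1 : (d : ℝ) * a + ((d : ℝ) * (d : ℝ) - (d : ℝ)) * b = 1 := by
    have hpt : ∀ U : Matrix.unitaryGroup (Fin d) ℂ, (1 : ℝ) = ∑ k, ∑ l, q U k * q U l := by
      intro U
      have hc := colnorm d U e0
      calc (1:ℝ) = (∑ k, q U k) * (∑ l, q U l) := by rw [hq]; simp only []; rw [hc]; norm_num
        _ = ∑ k, ∑ l, q U k * q U l := by rw [Finset.sum_mul_sum]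
    have h1 : (1 : ℝ) = ∫ U, ∑ k, ∑ l, q U k * q U l ∂μ := by
      rw [← integral_congr_ae (ae_of_all _ hpt)]
      simp
    rw [integral_finset_sum _ (fun k _ => integrable_finset_sum _ (fun l _ => qqint k l))] at h1
    have h2 : ∀ k : Fin d, ∫ U, ∑ l, q U k * q U l ∂μ = a + ((d:ℝ) - 1) * b := by
      intro k
      rw [integral_finset_sum _ (fun l _ => qqint k l)]
      have : ∀ l : Fin d, ∫ U, q U k * q U l ∂μ = if l = k then a else b := by
        intro l
        by_cases hlk : l = k
        · rw [if_pos hlk, hlk, m4eq]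
        · rw [if_neg hlk, m2eq k l (fun hh => hlk hh.symm)]
      rw [Finset.sum_congr rfl (fun l _ => this l)]
      have e2 : ∀ l : Fin d, (if l = k then a else b) = b + (if l = k then a - b else 0) := by
        intro l; split <;> ring
      rw [Finset.sum_congr rfl (fun l _ => e2 l), Finset.sum_add_distrib, Finset.sum_const,
        Finset.sum_ite_eq' Finset.univ k (fun _ => a - b), if_pos (Finset.mem_univ k),
        Finset.card_univ, Fintype.card_fin, nsmul_eq_mul]
      ring
    rw [Finset.sum_congr rfl (fun k _ => h2 k), Finset.sum_const, Finset.card_univ,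
      Fintype.card_fin, nsmul_eq_mul] at h1
    linear_combination -h1
  -- final arithmetic
  have hd2 : (2:ℝ) ≤ (d:ℝ) := by exact_mod_cast hd
  have hb1 : ((d:ℝ) * (d:ℝ) + (d:ℝ)) * b = 1 := by linear_combination hnorm1 - (d:ℝ) * hab
  have key : ∫ U, (∑ k, q U k * q U k) ∂μ = 2 / ((d:ℝ) + 1) := by
    rw [integral_finset_sum _ (fun k _ => qqint k k),
      Finset.sum_congr rfl (fun k _ => m4eq k), Finset.sum_const, Finset.card_univ,
      Fintype.card_fin, nsmul_eq_mul]
    rw [eq_div_iff (by linarith : (d:ℝ) + 1 ≠ 0)]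
    linear_combination ((d:ℝ) * ((d:ℝ) + 1)) * hab + 2 * hb1
  have hfun : (fun U : Matrix.unitaryGroup (Fin d) ℂ => ∑ k, ‖(U : Matrix (Fin d) (Fin d) ℂ) k (⟨0, by omega⟩ : Fin d)‖ ^ 4)
      = fun U : Matrix.unitaryGroup (Fin d) ℂ => ∑ k, q U k * q U k := by
    funext U
    refine Finset.sum_congr rfl (fun k _ => ?_)
    show ‖(U : Matrix (Fin d) (Fin d) ℂ) k e0‖ ^ 4 = q U k * q U k
    rw [hq]
    ring
  have goal1 : ∫ U : Matrix.unitaryGroup (Fin d) ℂ, (∑ k, ‖(U : Matrix (Fin d) (Fin d) ℂ) k (⟨0, by omega⟩ : Fin d)‖ ^ 4) ∂μ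
      = 2 / ((d:ℝ) + 1) := by
    rw [show (fun U : Matrix.unitaryGroup (Fin d) ℂ => ∑ k, ‖(U : Matrix (Fin d) (Fin d) ℂ) k (⟨0, by omega⟩ : Fin d)‖ ^ 4)
      = fun U : Matrix.unitaryGroup (Fin d) ℂ => ∑ k, q U k * q U k from hfun]
    exact key
  refine ⟨goal1, ?_⟩
  have sint : Integrable (fun U : Matrix.unitaryGroup (Fin d) ℂ => ∑ k, ‖(U : Matrix (Fin d) (Fin d) ℂ) k (⟨0, by omega⟩ : Fin d)‖ ^ 4) μ := by
    rw [hfun]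
    exact integrable_finset_sum _ (fun k _ => qqint k k)
  rw [integral_sub (integrable_const 1) sint, integral_const, goal1]
  simp
end

section
/- The purity of a pure state after single-qubit depolarizing noise with probability p is at most 1 - p + p²/2: for Λ_p(ρ) = (1-p)ρ + (p/2) I₁ ⊗ tr₁(ρ) acting on the first qubit of an n-qubit pure state |ψ⟩⟨ψ|, tr(Λ_p(|ψ⟩⟨ψ|)²) ≤ 1 - p + p²/2. -/
open Matrix
open scoped Kronecker

section Aux

variable {N : Type*} [Fintype N] [DecidableEq N]

private lemma mul_conj_norm (z : ℂ) : z * starRingEnd ℂ z = (‖z‖ : ℂ) ^ 2 := by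
  rw [Complex.mul_conj]
  norm_cast
  simp [Complex.normSq_eq_norm_sq]

private lemma aux_key (p : ℝ) (hp0 : 0 ≤ p) (hp1 : p ≤ 1)
    (ψ : Fin 2 × N → ℂ) (hψ : ∑ k, ‖ψ k‖ ^ 2 = 1) :
    (let ρ : Matrix (Fin 2 × N) (Fin 2 × N) ℂ :=
      Matrix.of fun i j => ψ i * starRingEnd ℂ (ψ j);
    let tr₁ρ : Matrix N N ℂ :=
      Matrix.of fun a b => ∑ s : Fin 2, ρ (s, a) (s, b);
    let Λρ : Matrix (Fin 2 × N) (Fin 2 × N) ℂ :=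
      ((1 - p : ℝ) : ℂ) • ρ + ((p / 2 : ℝ) : ℂ) • ((1 : Matrix (Fin 2) (Fin 2) ℂ) ⊗ₖ tr₁ρ);
    ((Λρ * Λρ).trace).re) ≤ 1 - p + p ^ 2 / 2 := by
  simp only []
  set ρ : Matrix (Fin 2 × N) (Fin 2 × N) ℂ :=
    Matrix.of fun i j => ψ i * starRingEnd ℂ (ψ j) with hρ
  set tr₁ρ : Matrix N N ℂ :=
    Matrix.of fun a b => ∑ s : Fin 2, ρ (s, a) (s, b) with htr
  set Λρ : Matrix (Fin 2 × N) (Fin 2 × N) ℂ :=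
    ((1 - p : ℝ) : ℂ) • ρ + ((p / 2 : ℝ) : ℂ) • ((1 : Matrix (Fin 2) (Fin 2) ℂ) ⊗ₖ tr₁ρ)
    with hΛ
  set c : N → N → ℂ := fun a b => ∑ s : Fin 2, ψ (s, a) * starRingEnd ℂ (ψ (s, b)) with hc
  set t : ℝ := ∑ a, ∑ b, ‖c a b‖ ^ 2 with ht
  -- conjugation symmetry of c
  have hcconj : ∀ a b, c b a = starRingEnd ℂ (c a b) := by
    intro a b
    simp only [hc, map_sum]
    exact Finset.sum_congr rfl fun s _ => by simp [mul_comm]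
  have hccm : ∀ a b, c a b * c b a = (‖c a b‖ : ℂ) ^ 2 := by
    intro a b
    rw [hcconj a b, mul_conj_norm]
  -- the sum ∑ a b, c a b * c b a
  have hS : ∑ a, ∑ b, c a b * c b a = (t : ℂ) := by
    rw [ht]
    push_cast
    exact Finset.sum_congr rfl fun a _ => Finset.sum_congr rfl fun b _ => hccm a b
  -- normalization
  have hψC : ∑ i, ψ i * starRingEnd ℂ (ψ i) = 1 := by
    have : ∑ i, ψ i * starRingEnd ℂ (ψ i) = ((∑ i, ‖ψ i‖ ^ 2 : ℝ) : ℂ) := by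
      push_cast
      exact Finset.sum_congr rfl fun i _ => mul_conj_norm _
    rw [this, hψ, Complex.ofReal_one]
  -- trace of ρ * ρ
  have h1 : (ρ * ρ).trace = 1 := by
    have : (ρ * ρ).trace = (∑ i, ψ i * starRingEnd ℂ (ψ i)) * ∑ j, ψ j * starRingEnd ℂ (ψ j) := by
      rw [Finset.sum_mul_sum]
      simp only [Matrix.trace, Matrix.diag, Matrix.mul_apply, ρ, Matrix.of_apply]
      exact Finset.sum_congr rfl fun i _ => Finset.sum_congr rfl fun j _ => by ring
    rw [this, hψC, one_mul]
  -- trace of σ * σ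
  have hσσ : (tr₁ρ * tr₁ρ).trace = (t : ℂ) := by
    rw [← hS]
    simp only [Matrix.trace, Matrix.diag, Matrix.mul_apply]
    rfl
  -- trace of ρ * (1 ⊗ₖ σ)
  have h2 : (ρ * ((1 : Matrix (Fin 2) (Fin 2) ℂ) ⊗ₖ tr₁ρ)).trace = (t : ℂ) := by
    rw [← hS]
    have e1 : (ρ * ((1 : Matrix (Fin 2) (Fin 2) ℂ) ⊗ₖ tr₁ρ)).trace
        = ∑ s : Fin 2, ∑ a : N, ∑ b : N, ρ (s, a) (s, b) * tr₁ρ b a := by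
      simp only [Matrix.trace, Matrix.diag, Matrix.mul_apply, Fintype.sum_prod_type,
        Matrix.kroneckerMap_apply, Matrix.one_apply, ite_mul, one_mul, zero_mul, mul_ite, mul_zero]
      refine Finset.sum_congr rfl fun s _ => Finset.sum_congr rfl fun a _ => ?_
      rw [Finset.sum_comm]
      simp
    rw [e1, Finset.sum_comm]
    refine Finset.sum_congr rfl fun a _ => ?_
    rw [Finset.sum_comm]
    refine Finset.sum_congr rfl fun b _ => ?_
    rw [← Finset.sum_mul]
    rfl
  have h3 : (((1 : Matrix (Fin 2) (Fin 2) ℂ) ⊗ₖ tr₁ρ) * ρ).trace = (t : ℂ) := by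
    rw [Matrix.trace_mul_comm]; exact h2
  -- trace of (1 ⊗ₖ σ)²
  have h4 : (((1 : Matrix (Fin 2) (Fin 2) ℂ) ⊗ₖ tr₁ρ) *
      ((1 : Matrix (Fin 2) (Fin 2) ℂ) ⊗ₖ tr₁ρ)).trace = 2 * (t : ℂ) := by
    rw [← Matrix.mul_kronecker_mul, Matrix.trace_kronecker, one_mul, hσσ]
    simp [Matrix.trace_one]
  -- full expansion
  have hexp : (Λρ * Λρ).trace
      = (((1 - p) ^ 2 + (p * (1 - p) + p ^ 2 / 2) * t : ℝ) : ℂ) := by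
    rw [hΛ, add_mul, mul_add, mul_add, Matrix.trace_add, Matrix.trace_add, Matrix.trace_add,
      smul_mul_assoc, smul_mul_assoc, smul_mul_assoc, smul_mul_assoc,
      mul_smul_comm, mul_smul_comm, mul_smul_comm, mul_smul_comm]
    simp only [Matrix.trace_smul, smul_eq_mul, h1, h2, h3, h4]
    push_cast
    ring
  -- bounds on t
  have ht0 : 0 ≤ t := by positivity
  have ht1 : t ≤ 1 := by
    have hCS : ∀ a b : N, ‖c a b‖ ^ 2 ≤ (∑ s, ‖ψ (s, a)‖ ^ 2) * ∑ s, ‖ψ (s, b)‖ ^ 2 := by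
      intro a b
      have h5 : ‖c a b‖ ≤ ∑ s, ‖ψ (s, a)‖ * ‖ψ (s, b)‖ := by
        refine (norm_sum_le _ _).trans_eq ?_
        exact Finset.sum_congr rfl fun s _ => by simp
      calc ‖c a b‖ ^ 2 ≤ (∑ s, ‖ψ (s, a)‖ * ‖ψ (s, b)‖) ^ 2 :=
            pow_le_pow_left₀ (norm_nonneg _) h5 2
        _ ≤ (∑ s, ‖ψ (s, a)‖ ^ 2) * ∑ s, ‖ψ (s, b)‖ ^ 2 :=
            Finset.sum_mul_sq_le_sq_mul_sq _ _ _
    have hsum : ∑ a : N, ∑ s : Fin 2, ‖ψ (s, a)‖ ^ 2 = 1 := by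
      rw [Finset.sum_comm]
      rw [Fintype.sum_prod_type] at hψ
      exact hψ
    calc t ≤ ∑ a, ∑ b, (∑ s, ‖ψ (s, a)‖ ^ 2) * ∑ s, ‖ψ (s, b)‖ ^ 2 :=
          Finset.sum_le_sum fun a _ => Finset.sum_le_sum fun b _ => hCS a b
      _ = (∑ a : N, ∑ s : Fin 2, ‖ψ (s, a)‖ ^ 2) * (∑ b : N, ∑ s : Fin 2, ‖ψ (s, b)‖ ^ 2) :=
          (Finset.sum_mul_sum _ _ _ _).symm
      _ = 1 := by rw [hsum, one_mul]
  rw [hexp, Complex.ofReal_re]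
  nlinarith [mul_le_mul_of_nonneg_left ht1 (by nlinarith : (0:ℝ) ≤ p * (1 - p) + p ^ 2 / 2)]

end Aux

/-- The purity of an `n`-qubit pure state (viewed as `ℂ² ⊗ ℂ^{2^{n-1}}`) after
single-qubit depolarizing noise `Λ_p(X) = (1-p)X + (p/2) I₁ ⊗ tr₁(X)` on the
first qubit is at most `1 - p + p²/2`. -/
theorem purity_after_depolarizing (n : ℕ) (hn : 1 ≤ n) (p : ℝ)
    (hp0 : 0 ≤ p) (hp1 : p ≤ 1)
    (ψ : Fin 2 × Fin (2 ^ (n - 1)) → ℂ) (hψ : ∑ k, ‖ψ k‖ ^ 2 = 1) :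
    (let ρ : Matrix (Fin 2 × Fin (2 ^ (n - 1))) (Fin 2 × Fin (2 ^ (n - 1))) ℂ :=
      Matrix.of fun i j => ψ i * starRingEnd ℂ (ψ j);
    let tr₁ρ : Matrix (Fin (2 ^ (n - 1))) (Fin (2 ^ (n - 1))) ℂ :=
      Matrix.of fun a b => ∑ s : Fin 2, ρ (s, a) (s, b);
    let Λρ : Matrix (Fin 2 × Fin (2 ^ (n - 1))) (Fin 2 × Fin (2 ^ (n - 1))) ℂ :=
      ((1 - p : ℝ) : ℂ) • ρ + ((p / 2 : ℝ) : ℂ) • ((1 : Matrix (Fin 2) (Fin 2) ℂ) ⊗ₖ tr₁ρ);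
    ((Λρ * Λρ).trace).re) ≤ 1 - p + p ^ 2 / 2 :=
  aux_key p hp0 hp1 ψ hψ
end

section
/- Rebit purity encodes qubit imaginarity: if |ψ⟩ = Σ_k (a_k + i b_k)|k⟩ with a_k, b_k ∈ ℝ is a unit vector in ℂ^{2^n} and |ψ_R⟩ = Σ_k (a_k |k⟩|R⟩ + b_k |k⟩|I⟩) is the corresponding (n+1)-rebit state, then 1 - |⟨ψ|ψ*⟩|² = 2(1 - tr(tr_{1:n}(|ψ_R⟩⟨ψ_R|)²)), where tr_{1:n} traces out all but the flag qubit. -/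
open Matrix

/-- Rebit purity encodes qubit imaginarity: for `ψ = Σ_k (a_k + i b_k)|k⟩` a unit
vector and the rebit state `ψ_R = Σ_k (a_k |k⟩|R⟩ + b_k |k⟩|I⟩)`,
`1 - |⟨ψ|ψ*⟩|² = 2(1 - tr(tr_{1:n}(|ψ_R⟩⟨ψ_R|)²))`. -/
theorem rebit_purity_encodes_imaginarity (n : ℕ) (hn : 1 ≤ n)
    (a b : Fin (2 ^ n) → ℝ)
    (hnorm : ∑ k, (a k ^ 2 + b k ^ 2) = 1) :
    (let ψ : Fin (2 ^ n) → ℂ := fun k => (a k : ℂ) + Complex.I * (b k : ℂ);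
    let ψR : Fin (2 ^ n) × Fin 2 → ℂ := fun p => if p.2 = 0 then (a p.1 : ℂ) else (b p.1 : ℂ);
    -- reduced state of the flag qubit, tracing out the first n qubits
    let M : Matrix (Fin 2) (Fin 2) ℂ :=
      Matrix.of fun s t => ∑ k, ψR (k, s) * starRingEnd ℂ (ψR (k, t));
    1 - ‖∑ k, starRingEnd ℂ (ψ k) * starRingEnd ℂ (ψ k)‖ ^ 2
      = 2 * (1 - ((M * M).trace).re)) := by
  intro ψ ψR M
  have hz : ∑ k, starRingEnd ℂ (ψ k) * starRingEnd ℂ (ψ k)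
      = Complex.ofReal (∑ k, (a k ^ 2 - b k ^ 2))
        - Complex.I * Complex.ofReal (∑ k, 2 * (a k * b k)) := by
    have h1 : ∀ k : Fin (2 ^ n), starRingEnd ℂ (ψ k) * starRingEnd ℂ (ψ k)
        = Complex.ofReal (a k ^ 2 - b k ^ 2)
          - Complex.I * Complex.ofReal (2 * (a k * b k)) := by
      intro k
      simp only [ψ, map_add, _root_.map_mul, Complex.conj_ofReal, Complex.conj_I]
      push_cast
      linear_combination ((b k : ℂ))^2 * Complex.I_sq
    rw [Finset.sum_congr rfl (fun k _ => h1 k), Finset.sum_sub_distrib,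
      ← Complex.ofReal_sum, ← Finset.mul_sum, ← Complex.ofReal_sum]
  have hM : ((M * M).trace).re
      = (∑ k, a k ^ 2) ^ 2 + (∑ k, b k ^ 2) ^ 2 + 2 * (∑ k, a k * b k) ^ 2 := by
    have e00 : M 0 0 = Complex.ofReal (∑ k, a k ^ 2) := by
      simp [M, ψR, Complex.conj_ofReal, sq]
    have e01 : M 0 1 = Complex.ofReal (∑ k, a k * b k) := by
      simp [M, ψR, Complex.conj_ofReal]
    have e10 : M 1 0 = Complex.ofReal (∑ k, a k * b k) := by
      simp [M, ψR, Complex.conj_ofReal, mul_comm]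
    have e11 : M 1 1 = Complex.ofReal (∑ k, b k ^ 2) := by
      simp [M, ψR, Complex.conj_ofReal, sq]
    rw [Matrix.trace, Fin.sum_univ_two]
    simp only [Matrix.diag_apply, Matrix.mul_apply, Fin.sum_univ_two, e00, e01, e10, e11]
    push_cast
    ring_nf
    norm_cast
    ring
  rw [hz, hM]
  have hnre : ‖Complex.ofReal (∑ k, (a k ^ 2 - b k ^ 2))
        - Complex.I * Complex.ofReal (∑ k, 2 * (a k * b k))‖ ^ 2
      = (∑ k, (a k ^ 2 - b k ^ 2)) ^ 2 + (∑ k, 2 * (a k * b k)) ^ 2 := by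
    rw [Complex.sq_norm, Complex.normSq_apply]
    simp only [Complex.sub_re, Complex.ofReal_re, Complex.mul_re, Complex.I_re,
      Complex.I_im, Complex.ofReal_im, Complex.sub_im, Complex.mul_im]
    ring
  rw [hnre]
  have hAB : (∑ k, a k ^ 2) + (∑ k, b k ^ 2) = 1 := by
    rw [← Finset.sum_add_distrib]; exact hnorm
  have ha : ∀ k : Fin (2^n), a k * a k = a k ^ 2 := fun k => (sq (a k)).symm
  simp only [Finset.sum_sub_distrib, ← Finset.mul_sum]
  set A := ∑ k, a k ^ 2
  set B := ∑ k, b k ^ 2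
  set C := ∑ k, a k * b k
  linear_combination (A + B + 1) * hAB
end

section
/- For a rebit encoding of a qubit state, the reduced flag-qubit purity satisfies tr(tr_{1:n}(|ψ_R⟩⟨ψ_R|)²) = ½(|⟨ψ*|ψ⟩|² + 1). -/
open Matrix

/-- For the rebit encoding of a qubit state, the purity of the reduced flag-qubit
state satisfies `tr(tr_{1:n}(|ψ_R⟩⟨ψ_R|)²) = ½(|⟨ψ*|ψ⟩|² + 1)`. -/
theorem rebit_flag_purity (n : ℕ) (hn : 1 ≤ n)
    (a b : Fin (2 ^ n) → ℝ)
    (hnorm : ∑ k, (a k ^ 2 + b k ^ 2) = 1) :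
    (let ψ : Fin (2 ^ n) → ℂ := fun k => (a k : ℂ) + Complex.I * (b k : ℂ);
    let ψR : Fin (2 ^ n) × Fin 2 → ℂ := fun p => if p.2 = 0 then (a p.1 : ℂ) else (b p.1 : ℂ);
    let M : Matrix (Fin 2) (Fin 2) ℂ :=
      Matrix.of fun s t => ∑ k, ψR (k, s) * starRingEnd ℂ (ψR (k, t));
    (M * M).trace = (((‖∑ k, ψ k * ψ k‖ ^ 2 + 1) / 2 : ℝ) : ℂ)) := by
  intro ψ ψR M
  set A : ℝ := ∑ k, a k ^ 2 with hA
  set B : ℝ := ∑ k, b k ^ 2 with hB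
  set C : ℝ := ∑ k, a k * b k with hC
  have hM00 : M 0 0 = (A : ℂ) := by
    simp only [M, ψR, Matrix.of_apply, hA]
    push_cast
    refine Finset.sum_congr rfl fun k _ => ?_
    simp [Complex.conj_ofReal, sq]
  have hM01 : M 0 1 = (C : ℂ) := by
    simp only [M, ψR, Matrix.of_apply, hC]
    push_cast
    refine Finset.sum_congr rfl fun k _ => ?_
    simp [Complex.conj_ofReal]
  have hM10 : M 1 0 = (C : ℂ) := by
    simp only [M, ψR, Matrix.of_apply, hC]
    push_cast
    refine Finset.sum_congr rfl fun k _ => ?_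
    simp [Complex.conj_ofReal, mul_comm]
  have hM11 : M 1 1 = (B : ℂ) := by
    simp only [M, ψR, Matrix.of_apply, hB]
    push_cast
    refine Finset.sum_congr rfl fun k _ => ?_
    simp [Complex.conj_ofReal, sq]
  have hz : ∑ k, ψ k * ψ k = ((A - B : ℝ) : ℂ) + ((2 * C : ℝ) : ℂ) * Complex.I := by
    simp only [ψ, hA, hB, hC]
    push_cast
    rw [Finset.mul_sum, Finset.sum_mul, ← Finset.sum_sub_distrib, ← Finset.sum_add_distrib]
    refine Finset.sum_congr rfl fun k _ => ?_
    have hI := Complex.I_sq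
    ring_nf
    rw [Complex.I_sq]
    ring
  have hnormz : ‖∑ k, ψ k * ψ k‖ ^ 2 = (A - B) ^ 2 + (2 * C) ^ 2 := by
    rw [hz, Complex.sq_norm]
    exact Complex.normSq_add_mul_I _ _
  have hAB : A + B = 1 := by
    rw [hA, hB, ← Finset.sum_add_distrib]; exact hnorm
  have htr : (M * M).trace = (A : ℂ) * A + (C : ℂ) * C + ((C : ℂ) * C + (B : ℂ) * B) := by
    simp [Matrix.trace, Matrix.mul_apply, Fin.sum_univ_two, Matrix.diag, hM00, hM01, hM10, hM11]
  rw [htr, hnormz]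
  push_cast
  have : (A : ℂ) + B = 1 := by exact_mod_cast congrArg (Complex.ofReal) hAB
  linear_combination (((A : ℂ) + B + 1) / 2) * this
end
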